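/- arXiv:2601.09554 — 5 statements merged into one kernel-verified Lean document; each statement's English description precedes it below -/
import Mathlib

section
/- Dispersion-optimal linear estimator, case 1 < α < 2: let α ∈ (1,2), γ₁, γ₂ > 0, and real coefficients a₁₁, a₁₂, a₂₁, a₂₂ with a₂₁ ≠ 0, a₂₂ ≠ 0 and a₁₁a₂₂ − a₁₂a₂₁ ≠ 0. Define f : ℝ → ℝ by f(a) = |a₂₁a − a₁₁|^α γ₁^α + |a₂₂a − a₁₂|^α γ₂^α. Then f attains a strict global minimum at â = ((|a₂₁|γ₁)^{α/(α−1)}·(a₁₁/a₂₁) + (|a₂₂|γ₂)^{α/(α−1)}·(a₁₂/a₂₂)) / ((|a₂₁|γ₁)^{α/(α−1)} + (|a₂₂|γ₂)^{α/(α−1)}), i.e., f(â) < f(a) for every a ≠ â. -/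
open Real Set

noncomputable def dphi (α x : ℝ) : ℝ := x * |x| ^ (α - 2)

lemma dphi_neg (α x : ℝ) : dphi α (-x) = - dphi α x := by
  simp [dphi, abs_neg]

lemma dphi_mul (α x y : ℝ) : dphi α (x * y) = dphi α x * dphi α y := by
  simp only [dphi, abs_mul, Real.mul_rpow (abs_nonneg x) (abs_nonneg y)]
  ring

lemma dphi_eq_of_nonneg {α x : ℝ} (hα : 1 < α) (hx : 0 ≤ x) :
    dphi α x = x ^ (α - 1) := by
  rcases eq_or_lt_of_le hx with h | h
  · simp [dphi, ← h, Real.zero_rpow (by linarith : α - 1 ≠ 0)]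
  · rw [dphi, abs_of_pos h]
    rw [show α - 1 = 1 + (α - 2) by ring, Real.rpow_add h, Real.rpow_one]

lemma dphi_strictMono {α : ℝ} (hα : 1 < α) : StrictMono (dphi α) := by
  have hα1 : (0:ℝ) < α - 1 := by linarith
  intro x y hxy
  rcases le_or_gt 0 x with hx | hx
  · rw [dphi_eq_of_nonneg hα hx, dphi_eq_of_nonneg hα (by linarith)]
    exact Real.rpow_lt_rpow hx hxy hα1
  · rcases le_or_gt 0 y with hy | hy
    · have h1 : dphi α x < 0 :=
        mul_neg_of_neg_of_pos hx (Real.rpow_pos_of_pos (abs_pos.2 hx.ne) _)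
      have h2 : 0 ≤ dphi α y := by
        rw [dphi_eq_of_nonneg hα hy]; exact Real.rpow_nonneg hy _
      linarith
    · have := Real.rpow_lt_rpow (by linarith : (0:ℝ) ≤ -y) (by linarith : -y < -x) hα1
      have ex : dphi α x = -((-x) ^ (α - 1)) := by
        rw [← dphi_eq_of_nonneg hα (by linarith : (0:ℝ) ≤ -x), dphi_neg]; ring
      have ey : dphi α y = -((-y) ^ (α - 1)) := by
        rw [← dphi_eq_of_nonneg hα (by linarith : (0:ℝ) ≤ -y), dphi_neg]; ring
      rw [ex, ey]; linarith

lemma dphi_mul_self {α x : ℝ} (hα : 1 < α) : dphi α x * x = |x| ^ α := by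
  rcases eq_or_ne x 0 with rfl | hx
  · simp [dphi, Real.zero_rpow (by linarith : α ≠ 0)]
  · have h : (0:ℝ) < |x| := abs_pos.2 hx
    rw [dphi, show x * |x| ^ (α - 2) * x = x ^ 2 * |x| ^ (α - 2) by ring, ← sq_abs,
      ← Real.rpow_two, ← Real.rpow_add h]
    norm_num

lemma hasDerivAt_abs_rpow' {α : ℝ} (hα : 1 < α) (x : ℝ) :
    HasDerivAt (fun t : ℝ => |t| ^ α) (α * dphi α x) x := by
  have := hasDerivAt_abs_rpow x hα
  convert this using 1
  rw [dphi]; ring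

/-- Dispersion-optimal linear estimator, case `1 < α < 2`: the α-th power of the error
dispersion `f(a) = |a₂₁a − a₁₁|^α γ₁^α + |a₂₂a − a₁₂|^α γ₂^α` attains a strict global
minimum at the given weighted combination `â`. -/
theorem dispersionOptimal_linear_estimator_one_lt_alpha
    (α γ₁ γ₂ : ℝ) (hα : α ∈ Set.Ioo (1 : ℝ) 2) (hγ₁ : 0 < γ₁) (hγ₂ : 0 < γ₂)
    (a₁₁ a₁₂ a₂₁ a₂₂ : ℝ) (ha₂₁ : a₂₁ ≠ 0) (ha₂₂ : a₂₂ ≠ 0)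
    (hdet : a₁₁ * a₂₂ - a₁₂ * a₂₁ ≠ 0)
    (f : ℝ → ℝ)
    (hf : f = fun a => |a₂₁ * a - a₁₁| ^ α * γ₁ ^ α + |a₂₂ * a - a₁₂| ^ α * γ₂ ^ α)
    (aHat : ℝ)
    (haHat : aHat = ((|a₂₁| * γ₁) ^ (α / (α - 1)) * (a₁₁ / a₂₁)
        + (|a₂₂| * γ₂) ^ (α / (α - 1)) * (a₁₂ / a₂₂))
        / ((|a₂₁| * γ₁) ^ (α / (α - 1)) + (|a₂₂| * γ₂) ^ (α / (α - 1)))) :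
    ∀ a : ℝ, a ≠ aHat → f aHat < f a := by
  obtain ⟨hα1, hα2⟩ := hα
  have hα1' : (0:ℝ) < α - 1 := by linarith
  set b₁ : ℝ := a₁₁ / a₂₁ with hb₁
  set b₂ : ℝ := a₁₂ / a₂₂ with hb₂
  set w₁ : ℝ := (|a₂₁| * γ₁) ^ (α / (α - 1)) with hw₁
  set w₂ : ℝ := (|a₂₂| * γ₂) ^ (α / (α - 1)) with hw₂
  have hw₁p : 0 < w₁ := Real.rpow_pos_of_pos (mul_pos (abs_pos.2 ha₂₁) hγ₁) _
  have hw₂p : 0 < w₂ := Real.rpow_pos_of_pos (mul_pos (abs_pos.2 ha₂₂) hγ₂) _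
  have hWp : 0 < w₁ + w₂ := by linarith
  set D : ℝ → ℝ := fun a =>
      α * γ₁ ^ α * |a₂₁| ^ α * dphi α (a - b₁) + α * γ₂ ^ α * |a₂₂| ^ α * dphi α (a - b₂)
    with hD
  have key : ∀ x c d : ℝ, c ≠ 0 →
      α * dphi α (c * x - d) * c = α * |c| ^ α * dphi α (x - d / c) := by
    intro x c d hc
    have h1 : c * x - d = c * (x - d / c) := by field_simp
    rw [h1, dphi_mul]
    have h2 : dphi α c * c = |c| ^ α := dphi_mul_self hα1
    calc α * (dphi α c * dphi α (x - d / c)) * c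
        = α * (dphi α c * c) * dphi α (x - d / c) := by ring
      _ = α * |c| ^ α * dphi α (x - d / c) := by rw [h2]
  have hf' : ∀ x : ℝ, HasDerivAt f (D x) x := by
    intro x
    have i₁ : HasDerivAt (fun a : ℝ => a₂₁ * a - a₁₁) a₂₁ x := by
      simpa using ((hasDerivAt_id x).const_mul a₂₁).sub_const a₁₁
    have i₂ : HasDerivAt (fun a : ℝ => a₂₂ * a - a₁₂) a₂₂ x := by
      simpa using ((hasDerivAt_id x).const_mul a₂₂).sub_const a₁₂
    have hDx : D x = (α * dphi α (a₂₁ * x - a₁₁) * a₂₁) * γ₁ ^ α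
        + (α * dphi α (a₂₂ * x - a₁₂) * a₂₂) * γ₂ ^ α := by
      rw [hD]
      simp only
      rw [key x a₂₁ a₁₁ ha₂₁, key x a₂₂ a₁₂ ha₂₂, ← hb₁, ← hb₂]
      ring
    rw [hf, hDx]
    exact (((hasDerivAt_abs_rpow' hα1 (a₂₁ * x - a₁₁)).comp x i₁).mul_const (γ₁ ^ α)).add
      (((hasDerivAt_abs_rpow' hα1 (a₂₂ * x - a₁₂)).comp x i₂).mul_const (γ₂ ^ α))
  have hDmono : StrictMono D := by
    have hc₁ : 0 < α * γ₁ ^ α * |a₂₁| ^ α :=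
      mul_pos (mul_pos (by linarith) (Real.rpow_pos_of_pos hγ₁ _))
        (Real.rpow_pos_of_pos (abs_pos.2 ha₂₁) _)
    have hc₂ : 0 < α * γ₂ ^ α * |a₂₂| ^ α :=
      mul_pos (mul_pos (by linarith) (Real.rpow_pos_of_pos hγ₂ _))
        (Real.rpow_pos_of_pos (abs_pos.2 ha₂₂) _)
    intro x y hxy
    have m₁ : dphi α (x - b₁) < dphi α (y - b₁) := dphi_strictMono hα1 (by linarith)
    have m₂ : dphi α (x - b₂) < dphi α (y - b₂) := dphi_strictMono hα1 (by linarith)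
    have := add_lt_add (mul_lt_mul_of_pos_left m₁ hc₁) (mul_lt_mul_of_pos_left m₂ hc₂)
    simpa [hD] using this
  have e1 : aHat - b₁ = (w₂ / (w₁ + w₂)) * (b₂ - b₁) := by
    rw [haHat]; field_simp; ring
  have e2 : aHat - b₂ = (w₁ / (w₁ + w₂)) * (b₁ - b₂) := by
    rw [haHat]; field_simp; ring
  have q1 : w₁ ^ (α - 1) = |a₂₁| ^ α * γ₁ ^ α := by
    rw [hw₁, ← Real.rpow_mul (by positivity), div_mul_cancel₀ _ (ne_of_gt hα1'),
      Real.mul_rpow (abs_nonneg _) hγ₁.le]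
  have q2 : w₂ ^ (α - 1) = |a₂₂| ^ α * γ₂ ^ α := by
    rw [hw₂, ← Real.rpow_mul (by positivity), div_mul_cancel₀ _ (ne_of_gt hα1'),
      Real.mul_rpow (abs_nonneg _) hγ₂.le]
  have hD0 : D aHat = 0 := by
    have p1 : dphi α (w₂ / (w₁ + w₂)) = w₂ ^ (α - 1) / (w₁ + w₂) ^ (α - 1) := by
      rw [dphi_eq_of_nonneg hα1 (by positivity), Real.div_rpow hw₂p.le hWp.le]
    have p2 : dphi α (w₁ / (w₁ + w₂)) = w₁ ^ (α - 1) / (w₁ + w₂) ^ (α - 1) := by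
      rw [dphi_eq_of_nonneg hα1 (by positivity), Real.div_rpow hw₁p.le hWp.le]
    rw [hD]
    simp only
    rw [e1, e2, dphi_mul, dphi_mul, show b₁ - b₂ = -(b₂ - b₁) by ring, dphi_neg,
      p1, p2, q1, q2]
    ring
  have hcont : Continuous f := by
    have : Differentiable ℝ f := fun x => (hf' x).differentiableAt
    exact this.continuous
  have hderiv : ∀ x, deriv f x = D x := fun x => (hf' x).deriv
  intro a ha
  rcases lt_or_gt_of_ne ha with h | h
  · have hanti : StrictAntiOn f (Iic aHat) := by
      apply strictAntiOn_of_deriv_neg (convex_Iic aHat) hcont.continuousOn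
      intro x hx
      rw [interior_Iic] at hx
      rw [hderiv]
      calc D x < D aHat := hDmono hx
        _ = 0 := hD0
    exact hanti (Set.mem_Iic.2 h.le) (Set.mem_Iic.2 le_rfl) h
  · have hmono : StrictMonoOn f (Ici aHat) := by
      apply strictMonoOn_of_deriv_pos (convex_Ici aHat) hcont.continuousOn
      intro x hx
      rw [interior_Ici] at hx
      rw [hderiv]
      calc (0:ℝ) = D aHat := hD0.symm
        _ < D x := hDmono hx
    exact hmono (Set.mem_Ici.2 le_rfl) (Set.mem_Ici.2 h.le) h
end

section
/- Dispersion-optimal linear estimator, case 0 < α ≤ 1: let α ∈ (0,1], γ₁, γ₂ > 0, and real coefficients a₁₁, a₁₂, a₂₁, a₂₂ with a₂₁ ≠ 0, a₂₂ ≠ 0 and a₁₁a₂₂ − a₁₂a₂₁ ≠ 0. Define f : ℝ → ℝ by f(a) = |a₂₁a − a₁₁|^α γ₁^α + |a₂₂a − a₁₂|^α γ₂^α, and set k₁ = a₁₁/a₂₁, k₂ = a₁₂/a₂₂. Then: (i) if |a₂₁|γ₁ > |a₂₂|γ₂ then f(k₁) ≤ f(a) for all a ∈ ℝ; (ii) if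 |a₂₁|γ₁ < |a₂₂|γ₂ then f(k₂) ≤ f(a) for all a ∈ ℝ; (iii) if |a₂₁|γ₁ = |a₂₂|γ₂ then f(k₁) = f(k₂) ≤ f(a) for all a ∈ ℝ. -/
open Real Set

private lemma real_rpow_add_le (u v α : ℝ) (hu : 0 ≤ u) (hv : 0 ≤ v)
    (h0 : 0 ≤ α) (h1 : α ≤ 1) : (u + v) ^ α ≤ u ^ α + v ^ α := by
  have key := NNReal.rpow_add_le_add_rpow u.toNNReal v.toNNReal h0 h1
  have := NNReal.coe_le_coe.2 key
  simpa [NNReal.coe_rpow, ← Real.toNNReal_add hu hv,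
    Real.coe_toNNReal _ hu, Real.coe_toNNReal _ hv,
    Real.coe_toNNReal _ (add_nonneg hu hv)] using this

private lemma key_subadd (α x y : ℝ) (h0 : 0 < α) (h1 : α ≤ 1) :
    |x + y| ^ α ≤ |x| ^ α + |y| ^ α := by
  calc |x + y| ^ α ≤ (|x| + |y|) ^ α :=
        Real.rpow_le_rpow (abs_nonneg _) (abs_add_le x y) h0.le
    _ ≤ |x| ^ α + |y| ^ α :=
        real_rpow_add_le _ _ _ (abs_nonneg _) (abs_nonneg _) h0.le h1

private lemma key_ineq (α c d x y : ℝ) (h0 : 0 < α) (h1 : α ≤ 1)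
    (hc : 0 ≤ c) (hcd : c ≤ d) :
    c ^ α * |x + y| ^ α ≤ d ^ α * |x| ^ α + c ^ α * |y| ^ α := by
  calc c ^ α * |x + y| ^ α ≤ c ^ α * (|x| ^ α + |y| ^ α) :=
        mul_le_mul_of_nonneg_left (key_subadd α x y h0 h1) (Real.rpow_nonneg hc α)
    _ = c ^ α * |x| ^ α + c ^ α * |y| ^ α := by ring
    _ ≤ d ^ α * |x| ^ α + c ^ α * |y| ^ α := by
        have h2 : c ^ α ≤ d ^ α := Real.rpow_le_rpow hc hcd h0.le
        have h3 := mul_le_mul_of_nonneg_right h2 (Real.rpow_nonneg (abs_nonneg x) α)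
        linarith

/-- Dispersion-optimal linear estimator, case `0 < α ≤ 1`: the α-th power of the error
dispersion `f(a) = |a₂₁a − a₁₁|^α γ₁^α + |a₂₂a − a₁₂|^α γ₂^α` is minimized at
`k₁ = a₁₁/a₂₁` or `k₂ = a₁₂/a₂₂` according to the comparison of `|a₂₁|γ₁` and `|a₂₂|γ₂`. -/
theorem dispersionOptimal_linear_estimator_alpha_le_one
    (α γ₁ γ₂ : ℝ) (hα : α ∈ Set.Ioc (0 : ℝ) 1) (hγ₁ : 0 < γ₁) (hγ₂ : 0 < γ₂)
    (a₁₁ a₁₂ a₂₁ a₂₂ : ℝ) (ha₂₁ : a₂₁ ≠ 0) (ha₂₂ : a₂₂ ≠ 0)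
    (hdet : a₁₁ * a₂₂ - a₁₂ * a₂₁ ≠ 0)
    (f : ℝ → ℝ)
    (hf : f = fun a => |a₂₁ * a - a₁₁| ^ α * γ₁ ^ α + |a₂₂ * a - a₁₂| ^ α * γ₂ ^ α)
    (k₁ k₂ : ℝ) (hk₁ : k₁ = a₁₁ / a₂₁) (hk₂ : k₂ = a₁₂ / a₂₂) :
    (|a₂₁| * γ₁ > |a₂₂| * γ₂ → ∀ a : ℝ, f k₁ ≤ f a) ∧
    (|a₂₁| * γ₁ < |a₂₂| * γ₂ → ∀ a : ℝ, f k₂ ≤ f a) ∧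
    (|a₂₁| * γ₁ = |a₂₂| * γ₂ → f k₁ = f k₂ ∧ ∀ a : ℝ, f k₁ ≤ f a) := by
  obtain ⟨h0, h1⟩ := hα
  set A := |a₂₁| * γ₁ with hA
  set B := |a₂₂| * γ₂ with hB
  have hA0 : 0 ≤ A := mul_nonneg (abs_nonneg _) hγ₁.le
  have hB0 : 0 ≤ B := mul_nonneg (abs_nonneg _) hγ₂.le
  have hfA : ∀ a : ℝ, f a = A ^ α * |a - k₁| ^ α + B ^ α * |a - k₂| ^ α := by
    intro a
    have e1 : a₂₁ * a - a₁₁ = a₂₁ * (a - k₁) := by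
      rw [hk₁]; field_simp
    have e2 : a₂₂ * a - a₁₂ = a₂₂ * (a - k₂) := by
      rw [hk₂]; field_simp
    rw [hf]
    simp only [e1, e2, abs_mul]
    rw [Real.mul_rpow (abs_nonneg _) (abs_nonneg _),
        Real.mul_rpow (abs_nonneg _) (abs_nonneg _),
        Real.mul_rpow (abs_nonneg _) hγ₁.le,
        Real.mul_rpow (abs_nonneg _) hγ₂.le]
    ring
  have hz : (0:ℝ) ^ α = 0 := Real.zero_rpow h0.ne'
  have hfk₁ : f k₁ = B ^ α * |k₁ - k₂| ^ α := by
    rw [hfA k₁, sub_self, abs_zero, hz, mul_zero, zero_add]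
  have hfk₂ : f k₂ = A ^ α * |k₁ - k₂| ^ α := by
    rw [hfA k₂, sub_self, abs_zero, hz, mul_zero, add_zero, abs_sub_comm]
  have case1 : B ≤ A → ∀ a : ℝ, f k₁ ≤ f a := by
    intro hBA a
    rw [hfk₁, hfA a]
    have h := key_ineq α B A (k₁ - a) (a - k₂) h0 h1 hB0 hBA
    have e : (k₁ - a) + (a - k₂) = k₁ - k₂ := by ring
    rw [e, abs_sub_comm k₁ a] at h
    exact h
  have case2 : A ≤ B → ∀ a : ℝ, f k₂ ≤ f a := by
    intro hAB a
    rw [hfk₂, hfA a]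
    have h := key_ineq α A B (k₂ - a) (a - k₁) h0 h1 hA0 hAB
    have e : (k₂ - a) + (a - k₁) = k₂ - k₁ := by ring
    rw [e, abs_sub_comm k₂ a, abs_sub_comm k₂ k₁] at h
    linarith
  refine ⟨fun h => case1 h.le, fun h => case2 h.le, fun h => ⟨?_, case1 h.ge⟩⟩
  rw [hfk₁, hfk₂, h]
end

section
/- Integrability of the conditional residual in the sub-Gaussian model: under the sub-Gaussian model, for (μ.map Y)-almost every y ∈ ℝ, ∫ √a d(condDistrib A Y μ y)(a) < ∞, and consequently the identity function is integrable with respect to condDistrib X Y μ y (i.e., E[|X| | Y = y] < ∞ for almost every y), even though X itself need not have a finite mean. -/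
open MeasureTheory ProbabilityTheory Real Set
open scoped ENNReal

set_option linter.unusedSectionVars false
set_option maxHeartbeats 1000000

lemma abs_le_lintegral_one_sub_cos (x : ℝ) :
    ENNReal.ofReal |x| ≤ ENNReal.ofReal (9 * π / 4) *
      ∫⁻ t in Ioi (0:ℝ), ENNReal.ofReal ((1 - Real.cos (t * x)) / t ^ 2) := by
  rcases eq_or_ne x 0 with rfl | hx
  · simp
  have hr : 0 < |x| := abs_pos.mpr hx
  set r := |x| with hrdef
  have hsub : Icc (π / (2 * r)) (3 * π / (2 * r)) ⊆ Ioi (0:ℝ) := by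
    intro t ht
    have := ht.1
    have hp : 0 < π / (2 * r) := by positivity
    exact lt_of_lt_of_le hp this
  have hlow : ∀ t ∈ Icc (π / (2 * r)) (3 * π / (2 * r)),
      (2 * r / (3 * π)) ^ 2 ≤ (1 - Real.cos (t * x)) / t ^ 2 := by
    intro t ht
    have ht0 : 0 < t := hsub ht
    have hcos : Real.cos (t * x) ≤ 0 := by
      have habs : Real.cos (t * x) = Real.cos (t * r) := by
        rcases abs_cases x with ⟨h1, _⟩ | ⟨h1, _⟩
        · rw [hrdef, h1]
        · rw [hrdef, h1, mul_neg, Real.cos_neg]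
      rw [habs]
      apply Real.cos_nonpos_of_pi_div_two_le_of_le
      · calc π / 2 = (π / (2 * r)) * r := by field_simp
        _ ≤ t * r := by nlinarith [ht.1]
      · calc t * r ≤ (3 * π / (2 * r)) * r := by nlinarith [ht.2]
        _ = 3 * π / 2 := by field_simp
        _ ≤ π + π / 2 := by linarith
    have h1 : (1:ℝ) ≤ 1 - Real.cos (t * x) := by linarith
    have h2 : t ^ 2 ≤ (3 * π / (2 * r)) ^ 2 := by
      apply sq_le_sq' _ ht.2
      have : (0:ℝ) < 3 * π / (2 * r) := by positivity
      linarith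
    have h3 : (0:ℝ) < t ^ 2 := by positivity
    rw [le_div_iff₀ h3]
    calc (2 * r / (3 * π)) ^ 2 * t ^ 2 ≤ (2 * r / (3 * π)) ^ 2 * (3 * π / (2 * r)) ^ 2 := by
          apply mul_le_mul_of_nonneg_left h2 (by positivity)
      _ = 1 := by field_simp
      _ ≤ 1 - Real.cos (t * x) := h1
  have key : ENNReal.ofReal ((2 * r / (3 * π)) ^ 2) * ENNReal.ofReal (π / r) ≤
      ∫⁻ t in Ioi (0:ℝ), ENNReal.ofReal ((1 - Real.cos (t * x)) / t ^ 2) := by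
    have h1 : ∫⁻ t in Icc (π / (2 * r)) (3 * π / (2 * r)),
        ENNReal.ofReal ((2 * r / (3 * π)) ^ 2) ≤
        ∫⁻ t in Icc (π / (2 * r)) (3 * π / (2 * r)),
          ENNReal.ofReal ((1 - Real.cos (t * x)) / t ^ 2) := by
      apply setLIntegral_mono (by fun_prop) fun t ht => ENNReal.ofReal_le_ofReal (hlow t ht)
    rw [setLIntegral_const] at h1
    have hvol : volume (Icc (π / (2 * r)) (3 * π / (2 * r))) = ENNReal.ofReal (π / r) := by
      rw [Real.volume_Icc]
      congr 1
      field_simp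
      ring
    rw [hvol] at h1
    refine h1.trans (lintegral_mono_set hsub)
  calc ENNReal.ofReal |x| = ENNReal.ofReal (9 * π / 4) *
        (ENNReal.ofReal ((2 * r / (3 * π)) ^ 2) * ENNReal.ofReal (π / r)) := by
        rw [← ENNReal.ofReal_mul (by positivity), ← ENNReal.ofReal_mul (by positivity)]
        congr 1
        field_simp
        ring
    _ ≤ _ := mul_le_mul_right key _

lemma lintegral_one_sub_exp_div_sq {d : ℝ} (hd : 0 < d) :
    ∫⁻ u in Ioi (0:ℝ), ENNReal.ofReal ((1 - Real.exp (-(d * u ^ 2))) / u ^ 2)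
      ≤ ENNReal.ofReal (2 * Real.sqrt d) := by
  set T : ℝ := 1 / Real.sqrt d with hT
  have hsd : 0 < Real.sqrt d := Real.sqrt_pos.mpr hd
  have hT0 : 0 < T := by positivity
  have hunion : Ioc (0:ℝ) T ∪ Ioi T = Ioi 0 := Ioc_union_Ioi_eq_Ioi hT0.le
  have hsplit : ∫⁻ u in Ioi (0:ℝ), ENNReal.ofReal ((1 - Real.exp (-(d * u ^ 2))) / u ^ 2)
      = (∫⁻ u in Ioc (0:ℝ) T, ENNReal.ofReal ((1 - Real.exp (-(d * u ^ 2))) / u ^ 2))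
      + ∫⁻ u in Ioi T, ENNReal.ofReal ((1 - Real.exp (-(d * u ^ 2))) / u ^ 2) := by
    rw [← hunion, lintegral_union measurableSet_Ioi]
    exact Ioc_disjoint_Ioi le_rfl
  rw [hsplit]
  have h1 : (∫⁻ u in Ioc (0:ℝ) T, ENNReal.ofReal ((1 - Real.exp (-(d * u ^ 2))) / u ^ 2))
      ≤ ENNReal.ofReal (Real.sqrt d) := by
    have hb : ∀ u ∈ Ioc (0:ℝ) T, ENNReal.ofReal ((1 - Real.exp (-(d * u ^ 2))) / u ^ 2)
        ≤ ENNReal.ofReal d := by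
      intro u hu
      have hu0 : 0 < u := hu.1
      apply ENNReal.ofReal_le_ofReal
      rw [div_le_iff₀ (by positivity : (0:ℝ) < u ^ 2)]
      have := Real.add_one_le_exp (-(d * u ^ 2))
      nlinarith [Real.exp_pos (-(d * u ^ 2))]
    calc (∫⁻ u in Ioc (0:ℝ) T, ENNReal.ofReal ((1 - Real.exp (-(d * u ^ 2))) / u ^ 2))
        ≤ ∫⁻ _ in Ioc (0:ℝ) T, ENNReal.ofReal d := setLIntegral_mono (by fun_prop) hb
      _ = ENNReal.ofReal d * ENNReal.ofReal T := by
          rw [setLIntegral_const, Real.volume_Ioc]; congr 1; simp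
      _ = ENNReal.ofReal (Real.sqrt d) := by
          rw [← ENNReal.ofReal_mul hd.le]
          congr 1
          rw [hT, mul_one_div, Real.div_sqrt]
  have h2 : (∫⁻ u in Ioi T, ENNReal.ofReal ((1 - Real.exp (-(d * u ^ 2))) / u ^ 2))
      ≤ ENNReal.ofReal (Real.sqrt d) := by
    have hb : ∀ u ∈ Ioi T, ENNReal.ofReal ((1 - Real.exp (-(d * u ^ 2))) / u ^ 2)
        ≤ ENNReal.ofReal (u ^ (-2 : ℝ)) := by
      intro u hu
      have hu0 : 0 < u := hT0.trans hu
      apply ENNReal.ofReal_le_ofReal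
      rw [Real.rpow_neg hu0.le, div_le_iff₀ (by positivity : (0:ℝ) < u ^ 2)]
      have h2' : u ^ (2:ℝ) = u ^ 2 := by
        rw [show (2:ℝ) = ((2:ℕ):ℝ) by norm_num, Real.rpow_natCast]
      rw [h2', inv_mul_cancel₀ (by positivity)]
      nlinarith [Real.exp_pos (-(d * u ^ 2))]
    calc (∫⁻ u in Ioi T, ENNReal.ofReal ((1 - Real.exp (-(d * u ^ 2))) / u ^ 2))
        ≤ ∫⁻ u in Ioi T, ENNReal.ofReal (u ^ (-2 : ℝ)) := setLIntegral_mono (by fun_prop) hb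
      _ = ENNReal.ofReal (∫ u in Ioi T, u ^ (-2 : ℝ)) := by
          rw [ofReal_integral_eq_lintegral_ofReal
            (integrableOn_Ioi_rpow_of_lt (by norm_num) hT0)]
          filter_upwards [self_mem_ae_restrict measurableSet_Ioi] with u hu
          exact Real.rpow_nonneg (hT0.trans hu).le _
      _ = ENNReal.ofReal (Real.sqrt d) := by
          rw [integral_Ioi_rpow_of_lt (by norm_num) hT0]
          norm_num
          rw [Real.rpow_neg_one, hT, one_div, inv_inv]
  calc _ ≤ ENNReal.ofReal (Real.sqrt d) + ENNReal.ofReal (Real.sqrt d) := add_le_add h1 h2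
    _ = ENNReal.ofReal (2 * Real.sqrt d) := by rw [← ENNReal.ofReal_add (by positivity) (by positivity)]; congr 1; ring

section Aux
open Complex
variable (σ₁ σ₂ ρ : ℝ) (π' : Measure (ℝ × ℝ)) [IsProbabilityMeasure π']

-- Gaussian Fourier representation: exp(-c y²) as integral of exp(isy) against Gaussian kernel
omit [IsProbabilityMeasure π'] in
lemma gauss_rep {c : ℝ} (hc : 0 < c) (y : ℝ) :
    ∫ s : ℝ, ((1 / Real.sqrt (4 * π * c) : ℝ) : ℂ) * Complex.exp (-((s ^ 2 / (4 * c) : ℝ) : ℂ))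
        * Complex.exp (((s * y : ℝ) : ℂ) * Complex.I)
      = ((Real.exp (-(c * y ^ 2)) : ℝ) : ℂ) := by
  have hb : (-(1 / (4 * c) : ℂ)).re < 0 := by
    simp only [neg_re, ofReal_re]
    norm_num
    positivity
  have key := integral_cexp_quadratic hb ((y : ℂ) * Complex.I) 0
  have heq : ∀ s : ℝ, ((1 / Real.sqrt (4 * π * c) : ℝ) : ℂ)
      * Complex.exp (-((s ^ 2 / (4 * c) : ℝ) : ℂ)) * Complex.exp (((s * y : ℝ) : ℂ) * Complex.I)
      = ((1 / Real.sqrt (4 * π * c) : ℝ) : ℂ)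
        * Complex.exp (-(1 / (4 * c) : ℂ) * s ^ 2 + (y : ℂ) * Complex.I * s + 0) := by
    intro s
    rw [mul_assoc, ← Complex.exp_add]
    congr 2
    push_cast
    ring
  rw [MeasureTheory.integral_congr_ae (Filter.Eventually.of_forall heq),
    MeasureTheory.integral_const_mul, key]
  have h1 : ((π : ℂ) / -(-(1 / (4 * c) : ℂ))) = ((4 * π * c : ℝ) : ℂ) := by
    push_cast
    field_simp
  rw [h1]
  have h2 : ((4 * π * c : ℝ) : ℂ) ^ (1 / 2 : ℂ) = ((Real.sqrt (4 * π * c) : ℝ) : ℂ) := by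
    rw [Real.sqrt_eq_rpow, show ((1:ℂ)/2) = ((1/2 : ℝ) : ℂ) by norm_num,
      ← Complex.ofReal_cpow (by positivity)]
  rw [h2]
  have h3 : (0 : ℂ) - ((y:ℂ) * Complex.I) ^ 2 / (4 * -(1 / (4 * c) : ℂ)) = -((c * y ^ 2 : ℝ) : ℂ) := by
    have hc' : (c : ℂ) ≠ 0 := by exact_mod_cast hc.ne'
    push_cast
    rw [mul_pow, Complex.I_sq]
    field_simp
    ring
  rw [h3]
  have h4 : ((Real.sqrt (4 * π * c) : ℝ) : ℂ) ≠ 0 := by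
    exact_mod_cast (Real.sqrt_pos.mpr (by positivity)).ne'
  rw [← mul_assoc, ← Complex.ofReal_mul]
  rw [one_div, inv_mul_cancel₀ (by exact_mod_cast (Real.sqrt_pos.mpr (by positivity)).ne' : (Real.sqrt (4*π*c) : ℝ) ≠ 0)]
  rw [Complex.ofReal_one, one_mul, ← Complex.ofReal_neg, Complex.ofReal_exp]

lemma weighted_charfun (hσ₂ : 0 < σ₂)
    (hchar : ∀ t s : ℝ, ∫ p, Complex.exp (((t * p.1 + s * p.2 : ℝ) : ℂ) * Complex.I) ∂π'
      = Complex.exp (-(((σ₁ ^ 2 * t ^ 2 + 2 * ρ * σ₁ * σ₂ * t * s + σ₂ ^ 2 * s ^ 2) / 2 : ℝ) : ℂ)))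
    {c : ℝ} (hc : 0 < c) (u : ℝ) :
    ∫ p, Complex.exp (((u * p.1 : ℝ) : ℂ) * Complex.I) * ((Real.exp (-(c * p.2 ^ 2)) : ℝ) : ℂ) ∂π'
      = ((1 / Real.sqrt (1 + 2 * σ₂ ^ 2 * c) : ℝ) : ℂ) *
        Complex.exp (-(((σ₁ ^ 2 / 2 - (ρ * σ₁ * σ₂) ^ 2 * c / (1 + 2 * σ₂ ^ 2 * c)) * u ^ 2 : ℝ) : ℂ)) := by
  set g : ℝ → ℂ := fun s => ((1 / Real.sqrt (4 * π * c) : ℝ) : ℂ)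
      * Complex.exp (-((s ^ 2 / (4 * c) : ℝ) : ℂ)) with hg
  set F : ℝ × ℝ → ℝ → ℂ := fun p s =>
      Complex.exp (((u * p.1 : ℝ) : ℂ) * Complex.I) * (g s * Complex.exp (((s * p.2 : ℝ) : ℂ) * Complex.I))
    with hF
  have hmeas : AEStronglyMeasurable (Function.uncurry F) (π'.prod volume) := by
    apply Measurable.aestronglyMeasurable
    apply Measurable.mul
    · exact (Complex.measurable_exp.comp
        ((Complex.measurable_ofReal.comp (measurable_const.mul (measurable_fst.comp measurable_fst))).mul measurable_const))
    apply Measurable.mul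
    · exact (Complex.measurable_exp.comp
        ((Complex.measurable_ofReal.comp ((measurable_snd.pow measurable_const).div measurable_const)).neg)).const_mul _
    · exact Complex.measurable_exp.comp
        ((Complex.measurable_ofReal.comp (measurable_snd.mul (measurable_snd.comp measurable_fst))).mul measurable_const)
  have hgint : Integrable (fun s : ℝ => 1 / Real.sqrt (4 * π * c) * Real.exp (-(1 / (4 * c)) * s ^ 2)) volume :=
    (integrable_exp_neg_mul_sq (by positivity)).const_mul _
  have hFint : Integrable (Function.uncurry F) (π'.prod volume) := by
    have hprod : Integrable (fun z : (ℝ × ℝ) × ℝ =>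
        (1 : ℝ) * (1 / Real.sqrt (4 * π * c) * Real.exp (-(1 / (4 * c)) * z.2 ^ 2))) (π'.prod volume) :=
      (integrable_const (1 : ℝ)).mul_prod hgint
    refine Integrable.mono' hprod hmeas ?_
    filter_upwards with z
    refine le_of_eq ?_
    have h1 : ‖Complex.exp (((u * z.1.1 : ℝ) : ℂ) * Complex.I)‖ = 1 := by
      rw [Complex.norm_exp]
      simp
    have h2 : ‖Complex.exp (((z.2 * z.1.2 : ℝ) : ℂ) * Complex.I)‖ = 1 := by
      rw [Complex.norm_exp]
      simp
    have h3 : ‖g z.2‖ = 1 / Real.sqrt (4 * π * c) * Real.exp (-(1 / (4 * c)) * z.2 ^ 2) := by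
      rw [hg]
      simp only [norm_mul, Complex.norm_real, Real.norm_eq_abs, Complex.norm_exp, neg_re,
        Complex.ofReal_re]
      rw [_root_.abs_of_nonneg (by positivity : (0:ℝ) ≤ 1 / Real.sqrt (4 * π * c))]
      congr 2
      ring
    calc ‖Function.uncurry F z‖ = ‖Complex.exp (((u * z.1.1 : ℝ) : ℂ) * Complex.I)‖
          * (‖g z.2‖ * ‖Complex.exp (((z.2 * z.1.2 : ℝ) : ℂ) * Complex.I)‖) := by
          simp [Function.uncurry, hF, norm_mul]
      _ = 1 * (1 / Real.sqrt (4 * π * c) * Real.exp (-(1 / (4 * c)) * z.2 ^ 2)) := by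
          rw [h1, h2, h3, mul_one]
  -- step 1: replace exp(-c p₂²) by its Gaussian integral representation
  have step1 : ∫ p, Complex.exp (((u * p.1 : ℝ) : ℂ) * Complex.I) * ((Real.exp (-(c * p.2 ^ 2)) : ℝ) : ℂ) ∂π'
      = ∫ p, (∫ s : ℝ, F p s) ∂π' := by
    apply MeasureTheory.integral_congr_ae
    filter_upwards with p
    rw [← gauss_rep hc p.2, MeasureTheory.integral_const_mul]
  rw [step1, MeasureTheory.integral_integral_swap hFint]
  -- step 2: inner integral over p via hchar
  have step2 : ∀ s : ℝ, ∫ p, F p s ∂π'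
      = g s * Complex.exp (-(((σ₁ ^ 2 * u ^ 2 + 2 * ρ * σ₁ * σ₂ * u * s + σ₂ ^ 2 * s ^ 2) / 2 : ℝ) : ℂ)) := by
    intro s
    have : ∀ p : ℝ × ℝ, F p s = g s * Complex.exp (((u * p.1 + s * p.2 : ℝ) : ℂ) * Complex.I) := by
      intro p
      rw [hF]
      simp only
      rw [mul_left_comm, ← Complex.exp_add]
      congr 2
      push_cast
      ring
    rw [MeasureTheory.integral_congr_ae (Filter.Eventually.of_forall this),
      MeasureTheory.integral_const_mul, hchar u s]
  rw [MeasureTheory.integral_congr_ae (Filter.Eventually.of_forall step2)]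
  -- step 3: compute the Gaussian integral in s
  set b : ℂ := -(((1 / (4 * c) + σ₂ ^ 2 / 2 : ℝ)) : ℂ) with hb
  have hEpos : (0:ℝ) < 1 / (4 * c) + σ₂ ^ 2 / 2 := by positivity
  have hbre : b.re < 0 := by
    rw [hb]
    simp only [neg_re, Complex.ofReal_re]
    linarith
  have key := integral_cexp_quadratic hbre (-((ρ * σ₁ * σ₂ * u : ℝ) : ℂ)) (-((σ₁ ^ 2 * u ^ 2 / 2 : ℝ) : ℂ))
  have heq : ∀ s : ℝ, g s * Complex.exp (-(((σ₁ ^ 2 * u ^ 2 + 2 * ρ * σ₁ * σ₂ * u * s + σ₂ ^ 2 * s ^ 2) / 2 : ℝ) : ℂ))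
      = ((1 / Real.sqrt (4 * π * c) : ℝ) : ℂ) *
        Complex.exp (b * (s:ℂ) ^ 2 + (-((ρ * σ₁ * σ₂ * u : ℝ) : ℂ)) * (s:ℂ) + (-((σ₁ ^ 2 * u ^ 2 / 2 : ℝ) : ℂ))) := by
    intro s
    rw [hg, hb]
    simp only
    rw [mul_assoc, ← Complex.exp_add]
    congr 2
    push_cast
    have hc' : (c : ℂ) ≠ 0 := by exact_mod_cast hc.ne'
    field_simp
    ring
  rw [MeasureTheory.integral_congr_ae (Filter.Eventually.of_forall heq),
    MeasureTheory.integral_const_mul, key]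
  -- step 4: simplify constants
  have hS : (0:ℝ) < 1 + 2 * σ₂ ^ 2 * c := by positivity
  have hE : (0:ℝ) < 1 / (4 * c) + σ₂ ^ 2 / 2 := by positivity
  have hcpow : ((π : ℂ) / -b) ^ (1 / 2 : ℂ)
      = ((Real.sqrt (π / (1 / (4 * c) + σ₂ ^ 2 / 2)) : ℝ) : ℂ) := by
    rw [hb, neg_neg]
    have : ((π : ℂ)) / (((1 / (4 * c) + σ₂ ^ 2 / 2 : ℝ)) : ℂ) = (((π / (1 / (4 * c) + σ₂ ^ 2 / 2) : ℝ)) : ℂ) := by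
      push_cast; ring
    rw [this, Real.sqrt_eq_rpow, show ((1:ℂ)/2) = ((1/2 : ℝ) : ℂ) by norm_num,
      ← Complex.ofReal_cpow (by positivity)]
  rw [hcpow]
  have hconst : (1 / Real.sqrt (4 * π * c)) * Real.sqrt (π / (1 / (4 * c) + σ₂ ^ 2 / 2))
      = 1 / Real.sqrt (1 + 2 * σ₂ ^ 2 * c) := by
    have h1 : π / (1 / (4 * c) + σ₂ ^ 2 / 2) = (4 * π * c) * (1 / (1 + 2 * σ₂ ^ 2 * c)) := by
      field_simp
      ring
    rw [h1, Real.sqrt_mul (by positivity : (0:ℝ) ≤ 4 * π * c),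
      show (1:ℝ) / (1 + 2 * σ₂ ^ 2 * c) = (1 + 2 * σ₂ ^ 2 * c)⁻¹ from one_div _, Real.sqrt_inv]
    have h5 : Real.sqrt (4 * π * c) ≠ 0 := (Real.sqrt_pos.mpr (by positivity)).ne'
    have h6 : Real.sqrt (1 + 2 * σ₂ ^ 2 * c) ≠ 0 := (Real.sqrt_pos.mpr (by positivity)).ne'
    field_simp
  have hreal : -(σ₁ ^ 2 * u ^ 2 / 2) + (ρ * σ₁ * σ₂ * u) ^ 2 / (4 * (1 / (4 * c) + σ₂ ^ 2 / 2))
      = -((σ₁ ^ 2 / 2 - (ρ * σ₁ * σ₂) ^ 2 * c / (1 + 2 * σ₂ ^ 2 * c)) * u ^ 2) := by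
    rw [div_add_div _ _ (by positivity : (4:ℝ) * c ≠ 0) (by norm_num : (2:ℝ) ≠ 0)]
    field_simp
    ring
  have hexp : (-((σ₁ ^ 2 * u ^ 2 / 2 : ℝ) : ℂ)) - (-((ρ * σ₁ * σ₂ * u : ℝ) : ℂ)) ^ 2 / (4 * b)
      = -(((σ₁ ^ 2 / 2 - (ρ * σ₁ * σ₂) ^ 2 * c / (1 + 2 * σ₂ ^ 2 * c)) * u ^ 2 : ℝ) : ℂ) := by
    have hstep : (-((σ₁ ^ 2 * u ^ 2 / 2 : ℝ) : ℂ)) - (-((ρ * σ₁ * σ₂ * u : ℝ) : ℂ)) ^ 2 / (4 * b)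
        = (((-(σ₁ ^ 2 * u ^ 2 / 2) + (ρ * σ₁ * σ₂ * u) ^ 2 / (4 * (1 / (4 * c) + σ₂ ^ 2 / 2))) : ℝ) : ℂ) := by
      rw [hb]
      have hE'' : ((1 / (4 * c) + σ₂ ^ 2 / 2 : ℝ) : ℂ) ≠ 0 := by
        exact_mod_cast hEpos.ne'
      rw [mul_neg, div_neg, sub_neg_eq_add, neg_sq]
      push_cast at hE'' ⊢
      field_simp
    rw [hstep, hreal, Complex.ofReal_neg]
  rw [hexp, ← mul_assoc, ← Complex.ofReal_mul, hconst]

lemma weighted_charfun_nonneg (hσ₂ : 0 < σ₂)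
    (hchar : ∀ t s : ℝ, ∫ p, Complex.exp (((t * p.1 + s * p.2 : ℝ) : ℂ) * Complex.I) ∂π'
      = Complex.exp (-(((σ₁ ^ 2 * t ^ 2 + 2 * ρ * σ₁ * σ₂ * t * s + σ₂ ^ 2 * s ^ 2) / 2 : ℝ) : ℂ)))
    {c : ℝ} (hc : 0 ≤ c) (u : ℝ) :
    ∫ p, Complex.exp (((u * p.1 : ℝ) : ℂ) * Complex.I) * ((Real.exp (-(c * p.2 ^ 2)) : ℝ) : ℂ) ∂π'
      = ((1 / Real.sqrt (1 + 2 * σ₂ ^ 2 * c) : ℝ) : ℂ) *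
        Complex.exp (-(((σ₁ ^ 2 / 2 - (ρ * σ₁ * σ₂) ^ 2 * c / (1 + 2 * σ₂ ^ 2 * c)) * u ^ 2 : ℝ) : ℂ)) := by
  rcases hc.lt_or_eq with hc' | hc'
  · exact weighted_charfun σ₁ σ₂ ρ π' hσ₂ hchar hc' u
  subst hc'
  have h1 : ∀ p : ℝ × ℝ, Complex.exp (((u * p.1 : ℝ) : ℂ) * Complex.I)
      * ((Real.exp (-((0:ℝ) * p.2 ^ 2)) : ℝ) : ℂ)
      = Complex.exp (((u * p.1 + 0 * p.2 : ℝ) : ℂ) * Complex.I) := by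
    intro p
    norm_num
  rw [MeasureTheory.integral_congr_ae (Filter.Eventually.of_forall h1), hchar u 0]
  norm_num
  congr 1
  ring

lemma cos_weighted (hσ₂ : 0 < σ₂)
    (hchar : ∀ t s : ℝ, ∫ p, Complex.exp (((t * p.1 + s * p.2 : ℝ) : ℂ) * Complex.I) ∂π'
      = Complex.exp (-(((σ₁ ^ 2 * t ^ 2 + 2 * ρ * σ₁ * σ₂ * t * s + σ₂ ^ 2 * s ^ 2) / 2 : ℝ) : ℂ)))
    {c : ℝ} (hc : 0 ≤ c) (u : ℝ) :
    ∫ p, Real.cos (u * p.1) * Real.exp (-(c * p.2 ^ 2)) ∂π'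
      = (1 / Real.sqrt (1 + 2 * σ₂ ^ 2 * c)) *
        Real.exp (-((σ₁ ^ 2 / 2 - (ρ * σ₁ * σ₂) ^ 2 * c / (1 + 2 * σ₂ ^ 2 * c)) * u ^ 2)) := by
  have hmeas : AEStronglyMeasurable
      (fun p : ℝ × ℝ => Complex.exp (((u * p.1 : ℝ) : ℂ) * Complex.I)
        * ((Real.exp (-(c * p.2 ^ 2)) : ℝ) : ℂ)) π' := by
    apply Measurable.aestronglyMeasurable
    exact (Complex.measurable_exp.comp
        ((Complex.measurable_ofReal.comp (measurable_const.mul measurable_fst)).mul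
          measurable_const)).mul
      (Complex.measurable_ofReal.comp
        (Real.measurable_exp.comp ((measurable_const.mul (measurable_snd.pow measurable_const)).neg)))
  have hint : Integrable (fun p : ℝ × ℝ => Complex.exp (((u * p.1 : ℝ) : ℂ) * Complex.I)
      * ((Real.exp (-(c * p.2 ^ 2)) : ℝ) : ℂ)) π' := by
    refine Integrable.mono' (integrable_const (1:ℝ)) hmeas ?_
    filter_upwards with p
    rw [norm_mul]
    have h1 : ‖Complex.exp (((u * p.1 : ℝ) : ℂ) * Complex.I)‖ = 1 := by
      rw [Complex.norm_exp]; simp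
    have h2 : ‖((Real.exp (-(c * p.2 ^ 2)) : ℝ) : ℂ)‖ ≤ 1 := by
      rw [Complex.norm_real, Real.norm_eq_abs, _root_.abs_of_nonneg (Real.exp_pos _).le]
      exact Real.exp_le_one_iff.mpr (by nlinarith [sq_nonneg p.2])
    rw [h1, one_mul]
    exact h2
  have key := weighted_charfun_nonneg σ₁ σ₂ ρ π' hσ₂ hchar hc u
  have h3 := integral_re hint
  simp only [RCLike.re_to_complex] at h3
  calc ∫ p, Real.cos (u * p.1) * Real.exp (-(c * p.2 ^ 2)) ∂π'
      = ∫ p, (Complex.exp (((u * p.1 : ℝ) : ℂ) * Complex.I)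
          * ((Real.exp (-(c * p.2 ^ 2)) : ℝ) : ℂ)).re ∂π' := by
        apply MeasureTheory.integral_congr_ae
        filter_upwards with p
        rw [mul_comm (Complex.exp (((u * p.1 : ℝ) : ℂ) * Complex.I)),
          Complex.re_ofReal_mul, Complex.exp_mul_I]
        simp only [Complex.add_re, Complex.mul_re, Complex.I_re, Complex.I_im,
          Complex.cos_ofReal_re, Complex.sin_ofReal_im, Complex.sin_ofReal_re,
          Complex.cos_ofReal_im]
        ring
    _ = (∫ p, Complex.exp (((u * p.1 : ℝ) : ℂ) * Complex.I)
          * ((Real.exp (-(c * p.2 ^ 2)) : ℝ) : ℂ) ∂π').re := h3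
    _ = _ := by
        rw [key, ← Complex.ofReal_neg, ← Complex.ofReal_exp, ← Complex.ofReal_mul,
          Complex.ofReal_re]

lemma integrable_exp_weight {c : ℝ} (hc : 0 ≤ c) :
    Integrable (fun p : ℝ × ℝ => Real.exp (-(c * p.2 ^ 2))) π' := by
  refine Integrable.mono' (integrable_const (1:ℝ)) ?_ ?_
  · exact (Real.measurable_exp.comp
      ((measurable_const.mul (measurable_snd.pow measurable_const)).neg)).aestronglyMeasurable
  · filter_upwards with p
    rw [Real.norm_eq_abs, _root_.abs_of_nonneg (Real.exp_pos _).le]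
    exact Real.exp_le_one_iff.mpr (by nlinarith [sq_nonneg p.2])

lemma integrable_cos_exp_weight {c : ℝ} (hc : 0 ≤ c) (u : ℝ) :
    Integrable (fun p : ℝ × ℝ => Real.cos (u * p.1) * Real.exp (-(c * p.2 ^ 2))) π' := by
  refine Integrable.mono' (integrable_const (1:ℝ)) ?_ ?_
  · exact ((Real.measurable_cos.comp (measurable_const.mul measurable_fst)).mul
      (Real.measurable_exp.comp
        ((measurable_const.mul (measurable_snd.pow measurable_const)).neg))).aestronglyMeasurable
  · filter_upwards with p
    rw [Real.norm_eq_abs, abs_mul]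
    have h1 : |Real.cos (u * p.1)| ≤ 1 := Real.abs_cos_le_one _
    have h2 : |Real.exp (-(c * p.2 ^ 2))| ≤ 1 := by
      rw [_root_.abs_of_nonneg (Real.exp_pos _).le]
      exact Real.exp_le_one_iff.mpr (by nlinarith [sq_nonneg p.2])
    nlinarith [abs_nonneg (Real.cos (u * p.1)), abs_nonneg (Real.exp (-(c * p.2 ^ 2)))]

lemma lint_exp_weight (hσ₂ : 0 < σ₂)
    (hchar : ∀ t s : ℝ, ∫ p, Complex.exp (((t * p.1 + s * p.2 : ℝ) : ℂ) * Complex.I) ∂π'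
      = Complex.exp (-(((σ₁ ^ 2 * t ^ 2 + 2 * ρ * σ₁ * σ₂ * t * s + σ₂ ^ 2 * s ^ 2) / 2 : ℝ) : ℂ)))
    {c : ℝ} (hc : 0 ≤ c) :
    ∫⁻ p, ENNReal.ofReal (Real.exp (-(c * p.2 ^ 2))) ∂π'
      = ENNReal.ofReal (1 / Real.sqrt (1 + 2 * σ₂ ^ 2 * c)) := by
  rw [← ofReal_integral_eq_lintegral_ofReal (integrable_exp_weight π' hc)
    (Filter.Eventually.of_forall fun p => (Real.exp_pos _).le)]
  congr 1
  have := cos_weighted σ₁ σ₂ ρ π' hσ₂ hchar hc 0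
  simpa using this

lemma lint_one_sub_cos_weight (hσ₂ : 0 < σ₂)
    (hchar : ∀ t s : ℝ, ∫ p, Complex.exp (((t * p.1 + s * p.2 : ℝ) : ℂ) * Complex.I) ∂π'
      = Complex.exp (-(((σ₁ ^ 2 * t ^ 2 + 2 * ρ * σ₁ * σ₂ * t * s + σ₂ ^ 2 * s ^ 2) / 2 : ℝ) : ℂ)))
    {c : ℝ} (hc : 0 ≤ c) (u : ℝ) :
    ∫⁻ p, ENNReal.ofReal ((1 - Real.cos (u * p.1)) * Real.exp (-(c * p.2 ^ 2))) ∂π'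
      = ENNReal.ofReal ((1 / Real.sqrt (1 + 2 * σ₂ ^ 2 * c)) *
          (1 - Real.exp (-((σ₁ ^ 2 / 2 - (ρ * σ₁ * σ₂) ^ 2 * c / (1 + 2 * σ₂ ^ 2 * c)) * u ^ 2)))) := by
  have hint : Integrable (fun p : ℝ × ℝ => (1 - Real.cos (u * p.1)) * Real.exp (-(c * p.2 ^ 2))) π' := by
    have heq : (fun p : ℝ × ℝ => (1 - Real.cos (u * p.1)) * Real.exp (-(c * p.2 ^ 2)))
        = fun p => Real.exp (-(c * p.2 ^ 2)) - Real.cos (u * p.1) * Real.exp (-(c * p.2 ^ 2)) := by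
      funext p; ring
    rw [heq]
    exact (integrable_exp_weight π' hc).sub (integrable_cos_exp_weight π' hc u)
  rw [← ofReal_integral_eq_lintegral_ofReal hint (Filter.Eventually.of_forall fun p =>
    mul_nonneg (by nlinarith [Real.cos_le_one (u * p.1)]) (Real.exp_pos _).le)]
  congr 1
  have hsub : ∫ p, (1 - Real.cos (u * p.1)) * Real.exp (-(c * p.2 ^ 2)) ∂π'
      = (∫ p, Real.exp (-(c * p.2 ^ 2)) ∂π') - ∫ p, Real.cos (u * p.1) * Real.exp (-(c * p.2 ^ 2)) ∂π' := by
    rw [← integral_sub (integrable_exp_weight π' hc) (integrable_cos_exp_weight π' hc u)]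
    congr 1 with p
    ring
  rw [hsub, cos_weighted σ₁ σ₂ ρ π' hσ₂ hchar hc u]
  have h0 := cos_weighted σ₁ σ₂ ρ π' hσ₂ hchar hc 0
  norm_num at h0
  rw [h0]
  ring

lemma pair_abs_bound (hσ₁ : 0 < σ₁) (hσ₂ : 0 < σ₂) (hρ : |ρ| ≤ 1)
    (hchar : ∀ t s : ℝ, ∫ p, Complex.exp (((t * p.1 + s * p.2 : ℝ) : ℂ) * Complex.I) ∂π'
      = Complex.exp (-(((σ₁ ^ 2 * t ^ 2 + 2 * ρ * σ₁ * σ₂ * t * s + σ₂ ^ 2 * s ^ 2) / 2 : ℝ) : ℂ)))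
    {c : ℝ} (hc : 0 ≤ c) :
    ∫⁻ p, ENNReal.ofReal (|p.1| * Real.exp (-(c * p.2 ^ 2))) ∂π'
      ≤ ENNReal.ofReal (9 * π / 4 * (2 * Real.sqrt (σ₁ ^ 2 / 2))) *
        ENNReal.ofReal (1 / Real.sqrt (1 + 2 * σ₂ ^ 2 * c)) := by
  have hS : (0:ℝ) < 1 + 2 * σ₂ ^ 2 * c := by positivity
  set K : ℝ := 1 / Real.sqrt (1 + 2 * σ₂ ^ 2 * c) with hKdef
  set D : ℝ := σ₁ ^ 2 / 2 - (ρ * σ₁ * σ₂) ^ 2 * c / (1 + 2 * σ₂ ^ 2 * c) with hDdef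
  have hKnn : 0 ≤ K := by positivity
  have hρ2 : ρ ^ 2 ≤ 1 := by
    have h := abs_le.mp hρ
    nlinarith [h.1, h.2]
  have hD0 : 0 < D := by
    rw [hDdef, sub_pos, div_lt_iff₀ hS]
    nlinarith [mul_nonneg (sub_nonneg.mpr hρ2)
      (mul_nonneg (mul_nonneg (sq_nonneg σ₁) (sq_nonneg σ₂)) hc), pow_pos hσ₁ 2]
  have hDle : D ≤ σ₁ ^ 2 / 2 := by
    rw [hDdef]
    have : (0:ℝ) ≤ (ρ * σ₁ * σ₂) ^ 2 * c / (1 + 2 * σ₂ ^ 2 * c) := by positivity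
    linarith
  -- pointwise bound
  have hpt : ∀ p : ℝ × ℝ, ENNReal.ofReal (|p.1| * Real.exp (-(c * p.2 ^ 2)))
      ≤ ENNReal.ofReal (9 * π / 4) *
        ∫⁻ u in Ioi (0:ℝ), ENNReal.ofReal ((1 - Real.cos (u * p.1)) * Real.exp (-(c * p.2 ^ 2)) / u ^ 2) := by
    intro p
    rw [ENNReal.ofReal_mul (abs_nonneg _)]
    calc ENNReal.ofReal |p.1| * ENNReal.ofReal (Real.exp (-(c * p.2 ^ 2)))
        ≤ (ENNReal.ofReal (9 * π / 4) *
            ∫⁻ u in Ioi (0:ℝ), ENNReal.ofReal ((1 - Real.cos (u * p.1)) / u ^ 2)) *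
            ENNReal.ofReal (Real.exp (-(c * p.2 ^ 2))) :=
          mul_le_mul_left (abs_le_lintegral_one_sub_cos p.1) _
      _ = _ := by
          rw [mul_assoc, ← lintegral_mul_const _ (by fun_prop)]
          congr 1
          refine setLIntegral_congr_fun measurableSet_Ioi (fun u hu => ?_)
          rw [← ENNReal.ofReal_mul
            (div_nonneg (by nlinarith [Real.cos_le_one (u * p.1)]) (sq_nonneg u))]
          congr 1
          ring
  calc ∫⁻ p, ENNReal.ofReal (|p.1| * Real.exp (-(c * p.2 ^ 2))) ∂π'
      ≤ ∫⁻ p, ENNReal.ofReal (9 * π / 4) *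
          (∫⁻ u in Ioi (0:ℝ), ENNReal.ofReal ((1 - Real.cos (u * p.1)) * Real.exp (-(c * p.2 ^ 2)) / u ^ 2)) ∂π' :=
        lintegral_mono hpt
    _ = ENNReal.ofReal (9 * π / 4) *
        ∫⁻ p, (∫⁻ u in Ioi (0:ℝ), ENNReal.ofReal ((1 - Real.cos (u * p.1)) * Real.exp (-(c * p.2 ^ 2)) / u ^ 2)) ∂π' := by
        have hm : Measurable fun p : ℝ × ℝ => ∫⁻ u in Ioi (0:ℝ),
            ENNReal.ofReal ((1 - Real.cos (u * p.1)) * Real.exp (-(c * p.2 ^ 2)) / u ^ 2) :=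
          Measurable.lintegral_prod_right' (f := fun q : (ℝ × ℝ) × ℝ =>
            ENNReal.ofReal ((1 - Real.cos (q.2 * q.1.1)) * Real.exp (-(c * q.1.2 ^ 2)) / q.2 ^ 2))
            (by fun_prop)
        rw [lintegral_const_mul _ hm]
    _ = ENNReal.ofReal (9 * π / 4) *
        ∫⁻ u in Ioi (0:ℝ), (∫⁻ p, ENNReal.ofReal ((1 - Real.cos (u * p.1)) * Real.exp (-(c * p.2 ^ 2)) / u ^ 2) ∂π') := by
        rw [lintegral_lintegral_swap (Measurable.aemeasurable (by fun_prop))]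
    _ ≤ ENNReal.ofReal (9 * π / 4) * (ENNReal.ofReal K * ENNReal.ofReal (2 * Real.sqrt D)) := by
        apply mul_le_mul_right
        have hinner : ∀ u ∈ Ioi (0:ℝ),
            (∫⁻ p, ENNReal.ofReal ((1 - Real.cos (u * p.1)) * Real.exp (-(c * p.2 ^ 2)) / u ^ 2) ∂π')
            = ENNReal.ofReal K * ENNReal.ofReal ((1 - Real.exp (-(D * u ^ 2))) / u ^ 2) := by
          intro u hu
          have hu0 : (0:ℝ) < u := hu
          have heq : ∀ p : ℝ × ℝ, ENNReal.ofReal ((1 - Real.cos (u * p.1)) * Real.exp (-(c * p.2 ^ 2)) / u ^ 2)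
              = ENNReal.ofReal (1 / u ^ 2) * ENNReal.ofReal ((1 - Real.cos (u * p.1)) * Real.exp (-(c * p.2 ^ 2))) := by
            intro p
            rw [← ENNReal.ofReal_mul (by positivity)]
            congr 1
            ring
          simp_rw [heq]
          rw [lintegral_const_mul _ (by fun_prop), lint_one_sub_cos_weight σ₁ σ₂ ρ π' hσ₂ hchar hc u]
          rw [← hKdef, ← hDdef]
          rw [ENNReal.ofReal_mul hKnn, show D * u ^ 2 = (σ₁ ^ 2 / 2 - (ρ * σ₁ * σ₂) ^ 2 * c / (1 + 2 * σ₂ ^ 2 * c)) * u ^ 2 by rw [hDdef]]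
          rw [← mul_assoc, mul_comm (ENNReal.ofReal (1 / u ^ 2)) (ENNReal.ofReal K), mul_assoc]
          congr 1
          rw [← ENNReal.ofReal_mul (by positivity)]
          congr 1
          ring
        rw [setLIntegral_congr_fun measurableSet_Ioi (fun u hu => hinner u hu),
          lintegral_const_mul _ (by fun_prop)]
        exact mul_le_mul_right (lintegral_one_sub_exp_div_sq hD0) _
    _ ≤ _ := by
        have h1 : ENNReal.ofReal (9 * π / 4) * (ENNReal.ofReal K * ENNReal.ofReal (2 * Real.sqrt D))
            = (ENNReal.ofReal (9 * π / 4) * ENNReal.ofReal (2 * Real.sqrt D)) * ENNReal.ofReal K := by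
          ring
        rw [h1]
        apply mul_le_mul_left
        rw [← ENNReal.ofReal_mul (by positivity)]
        apply ENNReal.ofReal_le_ofReal
        have h2 : Real.sqrt D ≤ Real.sqrt (σ₁ ^ 2 / 2) := Real.sqrt_le_sqrt hDle
        nlinarith [pi_pos, Real.sqrt_nonneg D]


end Aux

lemma sqrt_mul_invsqrt_le {σ₂ a : ℝ} (hσ₂ : 0 < σ₂) (ha : 0 ≤ a) :
    Real.sqrt a * (1 / Real.sqrt (1 + 2 * σ₂ ^ 2 * a)) ≤ 1 / (Real.sqrt 2 * σ₂) := by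
  have hS : (0:ℝ) < 1 + 2 * σ₂ ^ 2 * a := by positivity
  rw [mul_one_div, ← Real.sqrt_div ha]
  have h1 : a / (1 + 2 * σ₂ ^ 2 * a) ≤ 1 / (2 * σ₂ ^ 2) := by
    rw [div_le_div_iff₀ hS (by positivity)]
    nlinarith
  calc Real.sqrt (a / (1 + 2 * σ₂ ^ 2 * a)) ≤ Real.sqrt (1 / (2 * σ₂ ^ 2)) := Real.sqrt_le_sqrt h1
    _ = 1 / (Real.sqrt 2 * σ₂) := by
        rw [one_div, Real.sqrt_inv, one_div]
        congr 1
        rw [Real.sqrt_mul (by norm_num), Real.sqrt_sq hσ₂.le]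

/-- Integrability of the conditional residual in the sub-Gaussian SαS model
`X = √A·G₁`, `Y = √A·G₂`: for almost every `y`, `∫ √a d(condDistrib A Y μ y)(a) < ∞`,
and consequently the identity function is integrable with respect to
`condDistrib X Y μ y` (finite conditional first absolute moment). -/
theorem subGaussian_conditional_residual_integrable
    {Ω : Type*} [MeasurableSpace Ω] {μ : Measure Ω} [IsProbabilityMeasure μ]
    (α ρ σ₁ σ₂ : ℝ) (hα : α ∈ Set.Ioo (0 : ℝ) 2)
    (hσ₁ : 0 < σ₁) (hσ₂ : 0 < σ₂) (hρ : |ρ| ≤ 1)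
    (A G₁ G₂ : Ω → ℝ) (hA : Measurable A) (hG₁ : Measurable G₁) (hG₂ : Measurable G₂)
    (hApos : ∀ ω, 0 ≤ A ω)
    (hLaplace : ∀ u : ℝ, 0 ≤ u → ∫ ω, Real.exp (-u * A ω) ∂μ
      = Real.exp (-(Real.cos (π * α / 4) ^ (2 / α) * u) ^ (α / 2)))
    (hGauss : ∀ t s : ℝ, ∫ ω, Complex.exp (((t * G₁ ω + s * G₂ ω : ℝ) : ℂ) * Complex.I) ∂μ
      = Complex.exp (-(((σ₁ ^ 2 * t ^ 2 + 2 * ρ * σ₁ * σ₂ * t * s + σ₂ ^ 2 * s ^ 2) / 2 : ℝ) : ℂ)))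
    (hindep : IndepFun A (fun ω => (G₁ ω, G₂ ω)) μ)
    (X Y : Ω → ℝ) (hX : X = fun ω => Real.sqrt (A ω) * G₁ ω)
    (hY : Y = fun ω => Real.sqrt (A ω) * G₂ ω) :
    ∀ᵐ y ∂(μ.map Y),
      (∫⁻ a, ENNReal.ofReal (Real.sqrt a) ∂(condDistrib A Y μ y)) < ⊤ ∧
      Integrable (fun x => x) (condDistrib X Y μ y) := by
  have hsqA : Measurable fun ω => Real.sqrt (A ω) := hA.sqrt
  have hXm : Measurable X := by rw [hX]; exact hsqA.mul hG₁
  have hYm : Measurable Y := by rw [hY]; exact hsqA.mul hG₂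
  set π' : Measure (ℝ × ℝ) := μ.map (fun ω => (G₁ ω, G₂ ω)) with hπ'
  haveI : IsProbabilityMeasure π' := Measure.isProbabilityMeasure_map (hG₁.prodMk hG₂).aemeasurable
  haveI : IsProbabilityMeasure (μ.map A) := Measure.isProbabilityMeasure_map hA.aemeasurable
  haveI : IsProbabilityMeasure (μ.map Y) := Measure.isProbabilityMeasure_map hYm.aemeasurable
  have hπchar : ∀ t s : ℝ, ∫ p, Complex.exp (((t * p.1 + s * p.2 : ℝ) : ℂ) * Complex.I) ∂π'
      = Complex.exp (-(((σ₁ ^ 2 * t ^ 2 + 2 * ρ * σ₁ * σ₂ * t * s + σ₂ ^ 2 * s ^ 2) / 2 : ℝ) : ℂ)) := by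
    intro t s
    have hm : AEStronglyMeasurable
        (fun p : ℝ × ℝ => Complex.exp (((t * p.1 + s * p.2 : ℝ) : ℂ) * Complex.I))
        (μ.map (fun ω => (G₁ ω, G₂ ω))) := by
      apply Measurable.aestronglyMeasurable
      apply Complex.measurable_exp.comp
      apply Measurable.mul _ measurable_const
      apply Complex.measurable_ofReal.comp
      exact (measurable_const.mul measurable_fst).add (measurable_const.mul measurable_snd)
    rw [hπ', integral_map (hG₁.prodMk hG₂).aemeasurable hm]
    exact hGauss t s
  have hmap : μ.map (fun ω => (A ω, (G₁ ω, G₂ ω))) = (μ.map A).prod π' :=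
    (indepFun_iff_map_prod_eq_prod_map_map hA.aemeasurable (hG₁.prodMk hG₂).aemeasurable).mp hindep
  have hYsq : ∀ ω, Real.exp (-(Y ω) ^ 2) = Real.exp (-(A ω * (G₂ ω) ^ 2)) := by
    intro ω
    rw [hY]
    simp only
    rw [mul_pow, Real.sq_sqrt (hApos ω)]
  have htrans : ∀ F : ℝ × (ℝ × ℝ) → ℝ≥0∞, Measurable F →
      ∫⁻ ω, F (A ω, (G₁ ω, G₂ ω)) ∂μ = ∫⁻ a, ∫⁻ p, F (a, p) ∂π' ∂(μ.map A) := by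
    intro F hF
    rw [← lintegral_map hF (hA.prodMk (hG₁.prodMk hG₂)), hmap,
      lintegral_prod _ hF.aemeasurable]
  have haePos : ∀ᵐ a ∂(μ.map A), 0 ≤ a := by
    rw [ae_map_iff hA.aemeasurable measurableSet_Ici]
    exact Filter.Eventually.of_forall hApos
  -- Bound 1
  have hB1 : ∫⁻ ω, ENNReal.ofReal (Real.exp (-(Y ω) ^ 2) * Real.sqrt (A ω)) ∂μ
      ≤ ENNReal.ofReal (1 / (Real.sqrt 2 * σ₂)) := by
    have hFm : Measurable fun q : ℝ × (ℝ × ℝ) =>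
        ENNReal.ofReal (Real.sqrt q.1 * Real.exp (-(q.1 * q.2.2 ^ 2))) := by
      apply ENNReal.measurable_ofReal.comp
      exact (measurable_fst.sqrt).mul (Real.measurable_exp.comp
        ((measurable_fst.mul ((measurable_snd.comp measurable_snd).pow measurable_const)).neg))
    have heq : ∫⁻ ω, ENNReal.ofReal (Real.exp (-(Y ω) ^ 2) * Real.sqrt (A ω)) ∂μ
        = ∫⁻ a, ∫⁻ p, ENNReal.ofReal (Real.sqrt a * Real.exp (-(a * p.2 ^ 2))) ∂π' ∂(μ.map A) := by
      rw [← htrans _ hFm]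
      apply lintegral_congr fun ω => ?_
      rw [hYsq ω, mul_comm]
    rw [heq]
    calc ∫⁻ a, ∫⁻ p, ENNReal.ofReal (Real.sqrt a * Real.exp (-(a * p.2 ^ 2))) ∂π' ∂(μ.map A)
        ≤ ∫⁻ _, ENNReal.ofReal (1 / (Real.sqrt 2 * σ₂)) ∂(μ.map A) := by
          apply lintegral_mono_ae
          filter_upwards [haePos] with a ha
          have hinner : ∫⁻ p, ENNReal.ofReal (Real.sqrt a * Real.exp (-(a * p.2 ^ 2))) ∂π'
              = ENNReal.ofReal (Real.sqrt a) * ∫⁻ p, ENNReal.ofReal (Real.exp (-(a * p.2 ^ 2))) ∂π' := by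
            simp_rw [ENNReal.ofReal_mul (Real.sqrt_nonneg a)]
            rw [lintegral_const_mul _ (by fun_prop)]
          rw [hinner, lint_exp_weight σ₁ σ₂ ρ π' hσ₂ hπchar ha,
            ← ENNReal.ofReal_mul (Real.sqrt_nonneg a)]
          exact ENNReal.ofReal_le_ofReal (sqrt_mul_invsqrt_le hσ₂ ha)
      _ = ENNReal.ofReal (1 / (Real.sqrt 2 * σ₂)) := by simp
  -- Bound 2
  set C₁ : ℝ := 9 * π / 4 * (2 * Real.sqrt (σ₁ ^ 2 / 2)) with hC₁
  have hC₁nn : 0 ≤ C₁ := by positivity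
  have hB2 : ∫⁻ ω, ENNReal.ofReal (Real.exp (-(Y ω) ^ 2) * |X ω|) ∂μ
      ≤ ENNReal.ofReal (C₁ * (1 / (Real.sqrt 2 * σ₂))) := by
    have hFm : Measurable fun q : ℝ × (ℝ × ℝ) =>
        ENNReal.ofReal (Real.sqrt q.1 * (|q.2.1| * Real.exp (-(q.1 * q.2.2 ^ 2)))) := by
      apply ENNReal.measurable_ofReal.comp
      exact (measurable_fst.sqrt).mul (((measurable_fst.comp measurable_snd).abs).mul
        (Real.measurable_exp.comp
          ((measurable_fst.mul ((measurable_snd.comp measurable_snd).pow measurable_const)).neg)))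
    have heq : ∫⁻ ω, ENNReal.ofReal (Real.exp (-(Y ω) ^ 2) * |X ω|) ∂μ
        = ∫⁻ a, ∫⁻ p, ENNReal.ofReal (Real.sqrt a * (|p.1| * Real.exp (-(a * p.2 ^ 2)))) ∂π' ∂(μ.map A) := by
      rw [← htrans _ hFm]
      apply lintegral_congr fun ω => ?_
      rw [hYsq ω, hX]
      simp only
      rw [abs_mul, _root_.abs_of_nonneg (Real.sqrt_nonneg _)]
      ring_nf
    rw [heq]
    calc ∫⁻ a, ∫⁻ p, ENNReal.ofReal (Real.sqrt a * (|p.1| * Real.exp (-(a * p.2 ^ 2)))) ∂π' ∂(μ.map A)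
        ≤ ∫⁻ _, ENNReal.ofReal (C₁ * (1 / (Real.sqrt 2 * σ₂))) ∂(μ.map A) := by
          apply lintegral_mono_ae
          filter_upwards [haePos] with a ha
          have hinner : ∫⁻ p, ENNReal.ofReal (Real.sqrt a * (|p.1| * Real.exp (-(a * p.2 ^ 2)))) ∂π'
              = ENNReal.ofReal (Real.sqrt a) *
                ∫⁻ p, ENNReal.ofReal (|p.1| * Real.exp (-(a * p.2 ^ 2))) ∂π' := by
            simp_rw [ENNReal.ofReal_mul (Real.sqrt_nonneg a)]
            rw [lintegral_const_mul _ (by fun_prop)]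
          rw [hinner]
          calc ENNReal.ofReal (Real.sqrt a) *
              ∫⁻ p, ENNReal.ofReal (|p.1| * Real.exp (-(a * p.2 ^ 2))) ∂π'
              ≤ ENNReal.ofReal (Real.sqrt a) *
                (ENNReal.ofReal C₁ * ENNReal.ofReal (1 / Real.sqrt (1 + 2 * σ₂ ^ 2 * a))) :=
                mul_le_mul_right (pair_abs_bound σ₁ σ₂ ρ π' hσ₁ hσ₂ hρ hπchar ha) _
            _ = ENNReal.ofReal C₁ *
                (ENNReal.ofReal (Real.sqrt a) * ENNReal.ofReal (1 / Real.sqrt (1 + 2 * σ₂ ^ 2 * a))) := by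
                ring
            _ ≤ ENNReal.ofReal C₁ * ENNReal.ofReal (1 / (Real.sqrt 2 * σ₂)) := by
                apply mul_le_mul_right
                rw [← ENNReal.ofReal_mul (Real.sqrt_nonneg a)]
                exact ENNReal.ofReal_le_ofReal (sqrt_mul_invsqrt_le hσ₂ ha)
            _ = ENNReal.ofReal (C₁ * (1 / (Real.sqrt 2 * σ₂))) := by
                rw [← ENNReal.ofReal_mul hC₁nn]
      _ = ENNReal.ofReal (C₁ * (1 / (Real.sqrt 2 * σ₂))) := by simp
  -- Disintegration identity
  have hdis : ∀ (Z : Ω → ℝ), Measurable Z → ∀ f : ℝ → ℝ≥0∞, Measurable f →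
      ∫⁻ y, ENNReal.ofReal (Real.exp (-y ^ 2)) * ∫⁻ x, f x ∂(condDistrib Z Y μ y) ∂(μ.map Y)
        = ∫⁻ ω, ENNReal.ofReal (Real.exp (-(Y ω) ^ 2)) * f (Z ω) ∂μ := by
    intro Z hZ f hf
    haveI : IsProbabilityMeasure (μ.map fun ω => (Y ω, Z ω)) :=
      Measure.isProbabilityMeasure_map (hYm.prodMk hZ).aemeasurable
    have h1 : (μ.map Y) ⊗ₘ condDistrib Z Y μ = μ.map (fun ω => (Y ω, Z ω)) := by
      rw [condDistrib]
      nth_rewrite 1 [← Measure.fst_map_prodMk hZ (X := Y)]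
      exact Measure.disintegrate _ _
    have hg : Measurable fun q : ℝ × ℝ => ENNReal.ofReal (Real.exp (-q.1 ^ 2)) * f q.2 :=
      (ENNReal.measurable_ofReal.comp (Real.measurable_exp.comp
        ((measurable_fst.pow measurable_const).neg))).mul (hf.comp measurable_snd)
    calc ∫⁻ y, ENNReal.ofReal (Real.exp (-y ^ 2)) * ∫⁻ x, f x ∂(condDistrib Z Y μ y) ∂(μ.map Y)
        = ∫⁻ y, ∫⁻ x, ENNReal.ofReal (Real.exp (-y ^ 2)) * f x ∂(condDistrib Z Y μ y) ∂(μ.map Y) :=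
          lintegral_congr fun y => (lintegral_const_mul _ hf).symm
      _ = ∫⁻ q, ENNReal.ofReal (Real.exp (-q.1 ^ 2)) * f q.2 ∂((μ.map Y) ⊗ₘ condDistrib Z Y μ) :=
          (Measure.lintegral_compProd hg).symm
      _ = ∫⁻ q, ENNReal.ofReal (Real.exp (-q.1 ^ 2)) * f q.2 ∂(μ.map fun ω => (Y ω, Z ω)) := by
          rw [h1]
      _ = _ := by rw [lintegral_map hg (hYm.prodMk hZ)]
  -- finiteness a.e.
  have hfin1 : ∫⁻ y, ENNReal.ofReal (Real.exp (-y ^ 2)) *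
      ∫⁻ a, ENNReal.ofReal (Real.sqrt a) ∂(condDistrib A Y μ y) ∂(μ.map Y) ≠ ⊤ := by
    rw [hdis A hA (fun a => ENNReal.ofReal (Real.sqrt a)) Real.continuous_sqrt.measurable.ennreal_ofReal]
    refine ne_top_of_le_ne_top ENNReal.ofReal_ne_top
      (le_trans (le_of_eq (lintegral_congr fun ω =>
        (ENNReal.ofReal_mul (Real.exp_pos _).le).symm)) hB1)
  have hfin2 : ∫⁻ y, ENNReal.ofReal (Real.exp (-y ^ 2)) *
      ∫⁻ x, ENNReal.ofReal |x| ∂(condDistrib X Y μ y) ∂(μ.map Y) ≠ ⊤ := by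
    rw [hdis X hXm (fun x => ENNReal.ofReal |x|) measurable_abs.ennreal_ofReal]
    refine ne_top_of_le_ne_top ENNReal.ofReal_ne_top
      (le_trans (le_of_eq (lintegral_congr fun ω =>
        (ENNReal.ofReal_mul (Real.exp_pos _).le).symm)) hB2)
  have hae1 : ∀ᵐ y ∂(μ.map Y), ENNReal.ofReal (Real.exp (-y ^ 2)) *
      ∫⁻ a, ENNReal.ofReal (Real.sqrt a) ∂(condDistrib A Y μ y) < ⊤ := by
    apply ae_lt_top ?_ hfin1
    exact (ENNReal.measurable_ofReal.comp (Real.measurable_exp.comp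
      ((measurable_id.pow measurable_const).neg))).mul
      (Measurable.lintegral_kernel_prod_right'
        (f := fun q : ℝ × ℝ => ENNReal.ofReal (Real.sqrt q.2))
        measurable_snd.sqrt.ennreal_ofReal)
  have hae2 : ∀ᵐ y ∂(μ.map Y), ENNReal.ofReal (Real.exp (-y ^ 2)) *
      ∫⁻ x, ENNReal.ofReal |x| ∂(condDistrib X Y μ y) < ⊤ := by
    apply ae_lt_top ?_ hfin2
    exact (ENNReal.measurable_ofReal.comp (Real.measurable_exp.comp
      ((measurable_id.pow measurable_const).neg))).mul
      (Measurable.lintegral_kernel_prod_right'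
        (f := fun q : ℝ × ℝ => ENNReal.ofReal |q.2|)
        measurable_snd.abs.ennreal_ofReal)
  filter_upwards [hae1, hae2] with y h1 h2
  have hw : ENNReal.ofReal (Real.exp (-y ^ 2)) ≠ 0 :=
    (ENNReal.ofReal_pos.mpr (Real.exp_pos _)).ne'
  have hkey : ∀ x : ℝ≥0∞, ENNReal.ofReal (Real.exp (-y ^ 2)) * x < ⊤ → x < ⊤ := by
    intro x hx
    rw [lt_top_iff_ne_top]
    intro hxt
    rw [hxt, ENNReal.mul_top hw] at hx
    exact absurd hx (lt_irrefl _)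
  constructor
  · exact hkey _ h1
  · refine ⟨aestronglyMeasurable_id, ?_⟩
    rw [hasFiniteIntegral_iff_norm]
    have := hkey _ h2
    simpa [Real.norm_eq_abs] using this
end

section
/- A Gaussian scale mixture by a positive α/2-stable mixing variable is SαS: let A be a nonnegative random variable on a probability space (Ω, μ) with E[exp(−uA)] = exp(−(γ u)^{α/2}) for all u ≥ 0, where α ∈ (0,2) and γ > 0, and let G be a Gaussian random variable with law gaussianReal 0 σ² (σ² > 0), independent of A. Then for every t ∈ ℝ, the characteristic function of the law of √A·G at t equals exp(−(σ²γ/2)^{α/2}|t|^α); that is, √A·G is SαS(α, (σ²γ/2)^{1/2}). -/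
open MeasureTheory ProbabilityTheory Real Set

open scoped ENNReal NNReal

open Complex in
lemma gauss_cf {v : NNReal} (hv : v ≠ 0) (s : ℝ) :
    ∫ x : ℝ, Complex.exp (((s * x : ℝ) : ℂ) * Complex.I) ∂(gaussianReal 0 v)
      = (Real.exp (-((v : ℝ) * s ^ 2) / 2) : ℂ) := by
  have hv0 : (0:ℝ) < v := NNReal.coe_pos.mpr (pos_iff_ne_zero.mpr hv)
  have h2v : (0:ℝ) < 2 * π * v := by positivity
  rw [gaussianReal_of_var_ne_zero _ hv]
  have hpdf : gaussianPDF 0 v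
      = fun x => (((Real.toNNReal (gaussianPDFReal 0 v x)) : NNReal) : ℝ≥0∞) := rfl
  rw [hpdf, integral_withDensity_eq_integral_smul
      (show Measurable fun x => (gaussianPDFReal 0 v x).toNNReal from
        measurable_real_toNNReal.comp (measurable_gaussianPDFReal 0 v))]
  have hb : ((-(1/(2*(v:ℝ))) : ℂ)).re < 0 := by
    simp only [Complex.neg_re, Complex.one_re, Complex.ofReal_re]
    norm_num
    positivity
  have key := integral_cexp_quadratic hb ((s : ℂ) * Complex.I) 0
  have hptw : ∀ x : ℝ, (Real.toNNReal (gaussianPDFReal 0 v x))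
        • Complex.exp (((s * x : ℝ) : ℂ) * Complex.I)
      = ((Real.sqrt (2 * π * v))⁻¹ : ℝ)
        * Complex.exp ((-(1/(2*(v:ℝ))) : ℂ) * (x:ℂ) ^ 2 + ((s:ℂ) * Complex.I) * (x:ℂ) + 0) := by
    intro x
    rw [NNReal.smul_def, Real.coe_toNNReal _ (gaussianPDFReal_nonneg 0 v x)]
    rw [gaussianPDFReal_def]
    simp only [sub_zero]
    rw [Complex.real_smul]
    push_cast
    rw [mul_assoc, ← Complex.exp_add]
    congr 1
    push_cast
    ring
  simp_rw [hptw]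
  rw [integral_const_mul, key]
  have hc : ((s:ℂ) * Complex.I) ^ 2 / (4 * (-(1/(2*(v:ℝ))) : ℂ)) = ((v:ℝ) * s ^ 2) / 2 := by
    field_simp
    rw [Complex.I_sq]
    ring
  rw [hc]
  have hcpow : ((π : ℂ) / -(-(1/(2*(v:ℝ))))) ^ (1/2 : ℂ) = (Real.sqrt (2 * π * v) : ℂ) := by
    rw [neg_neg]
    have : ((π : ℂ) / (1/(2*(v:ℝ)))) = ((2 * π * v : ℝ) : ℂ) := by push_cast; field_simp
    rw [this, Real.sqrt_eq_rpow, Complex.ofReal_cpow h2v.le]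
    norm_num
  rw [hcpow]
  rw [zero_sub, ← mul_assoc, ← Complex.ofReal_mul,
    inv_mul_cancel₀ (by positivity : Real.sqrt (2 * π * (v:ℝ)) ≠ 0), Complex.ofReal_one, one_mul,
    Complex.ofReal_exp]
  congr 1
  push_cast
  ring

/-- A Gaussian scale mixture by a positive `α/2`-stable mixing variable is SαS: if `A ≥ 0`
has Laplace transform `u ↦ exp(−(γu)^{α/2})` and `G ~ N(0, v)` is independent of `A`, then
`√A·G` has characteristic function `t ↦ exp(−(vγ/2)^{α/2}|t|^α)`, i.e. it is
SαS(α, (vγ/2)^{1/2}). -/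
theorem gaussian_scale_mixture_is_sas
    {Ω : Type*} [MeasurableSpace Ω] {μ : Measure Ω} [IsProbabilityMeasure μ]
    (α γ : ℝ) (hα : α ∈ Set.Ioo (0 : ℝ) 2) (hγ : 0 < γ)
    (v : NNReal) (hv : 0 < v)
    (A G : Ω → ℝ) (hA : Measurable A) (hG : Measurable G)
    (hApos : ∀ ω, 0 ≤ A ω)
    (hLaplace : ∀ u : ℝ, 0 ≤ u → ∫ ω, Real.exp (-u * A ω) ∂μ
      = Real.exp (-(γ * u) ^ (α / 2)))
    (hGauss : μ.map G = gaussianReal 0 v)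
    (hindep : IndepFun A G μ) :
    ∀ t : ℝ, ∫ ω, Complex.exp (((t * (Real.sqrt (A ω) * G ω) : ℝ) : ℂ) * Complex.I) ∂μ
      = Complex.exp (-((((v : ℝ) * γ / 2) ^ (α / 2) * |t| ^ α : ℝ) : ℂ)) := by
  intro t
  have hv' : v ≠ 0 := hv.ne'
  have hv0 : (0:ℝ) < v := NNReal.coe_pos.mpr hv
  have hmap : μ.map (fun ω => (A ω, G ω)) = (μ.map A).prod (μ.map G) :=
    (indepFun_iff_map_prod_eq_prod_map_map hA.aemeasurable hG.aemeasurable).mp hindep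
  have hPA : IsProbabilityMeasure (μ.map A) := Measure.isProbabilityMeasure_map hA.aemeasurable
  have hPG : IsProbabilityMeasure (μ.map G) := Measure.isProbabilityMeasure_map hG.aemeasurable
  set F : ℝ × ℝ → ℂ :=
    fun p => Complex.exp (((t * (Real.sqrt p.1 * p.2) : ℝ) : ℂ) * Complex.I) with hF
  have hFm : Measurable F := by
    apply Complex.measurable_exp.comp
    apply Measurable.mul _ measurable_const
    apply Complex.measurable_ofReal.comp
    fun_prop
  have hFi : Integrable F ((μ.map A).prod (μ.map G)) := by
    refine Integrable.mono' (integrable_const 1) hFm.aestronglyMeasurable ?_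
    filter_upwards with p
    simp only [hF, Complex.norm_exp_ofReal_mul_I]
    exact le_refl 1
  have h1 : ∫ ω, Complex.exp (((t * (Real.sqrt (A ω) * G ω) : ℝ) : ℂ) * Complex.I) ∂μ
      = ∫ p, F p ∂((μ.map A).prod (μ.map G)) := by
    rw [← hmap, integral_map (hA.prodMk hG).aemeasurable hFm.aestronglyMeasurable]
  rw [h1, integral_prod _ hFi]
  have hinner : ∀ a : ℝ, ∫ x, F (a, x) ∂(μ.map G)
      = (Real.exp (-((v:ℝ) * (t * Real.sqrt a) ^ 2) / 2) : ℂ) := by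
    intro a
    rw [hGauss, ← gauss_cf hv' (t * Real.sqrt a)]
    congr 1 with x
    rw [hF]
    norm_num [mul_assoc]
  simp_rw [hinner]
  rw [integral_map hA.aemeasurable
    (Measurable.aestronglyMeasurable
      (show Measurable fun x : ℝ => ((Real.exp (-((v:ℝ) * (t * Real.sqrt x) ^ 2) / 2) : ℝ) : ℂ) from
        Complex.measurable_ofReal.comp
          (by fun_prop : Measurable fun x : ℝ => Real.exp (-((v:ℝ) * (t * Real.sqrt x) ^ 2) / 2))))]
  have hee : ∀ ω, (Real.exp (-((v:ℝ) * (t * Real.sqrt (A ω)) ^ 2) / 2) : ℂ)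
      = ((Real.exp (-((v:ℝ) * t ^ 2 / 2) * A ω)) : ℂ) := by
    intro ω
    congr 1
    rw [mul_pow, Real.sq_sqrt (hApos ω)]
    ring
  simp_rw [hee]
  have hoc : ∫ x, ((Real.exp (-((v:ℝ) * t ^ 2 / 2) * A x) : ℝ) : ℂ) ∂μ
      = ((∫ x, Real.exp (-((v:ℝ) * t ^ 2 / 2) * A x) ∂μ : ℝ) : ℂ) := integral_ofReal
  rw [hoc, hLaplace ((v:ℝ) * t ^ 2 / 2) (by positivity), Complex.ofReal_exp,
    Complex.ofReal_neg]
  congr 2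
  have h1 : γ * ((v:ℝ) * t ^ 2 / 2) = ((v:ℝ) * γ / 2) * t ^ 2 := by ring
  rw [h1, Real.mul_rpow (by positivity) (by positivity)]
  congr 1
  rw [← _root_.sq_abs, ← Real.rpow_natCast |t| 2, ← Real.rpow_mul (abs_nonneg t)]
  norm_num
  left
  ring_nf
end

section
/- MAP optimality of the linear estimator (analytic form): let τ > 0, c ∈ ℝ, and let p_A : (0,∞) → [0,∞) be a measurable function with ∫₀^∞ p_A(a) da = 1 and ∫₀^∞ a^{−1/2} p_A(a) da < ∞. Define q : ℝ → ℝ by q(x) = ∫₀^∞ (2π a τ²)^{−1/2} exp(−(x − c)²/(2 a τ²)) p_A(a) da. Then q(x) is finite for every x, and q attains a strict global maximum at x = c: for every x ≠ c, q(x) < q(c). (Applied with c = β·y, β = ρσ₁/σ₂, τ² = σ₁²(1−ρ²) and p_A the density of the positive α/2-stable mixing variable A, this says the posterior density of X given Y = y in the sub-Gaussian model is maximized exactly at the linear estimate β·y, so the MAP estimator of X given Y is β·Y.) -/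
open MeasureTheory Real Set

/-- MAP optimality of the linear estimator (analytic form): the Gaussian scale-mixture
posterior density `q(x) = ∫₀^∞ (2πaτ²)^{−1/2} exp(−(x−c)²/(2aτ²)) p_A(a) da` is finite
everywhere (the integrand is integrable) and attains a strict global maximum at `x = c`. -/
theorem map_strict_max_of_scale_mixture
    (τ c : ℝ) (hτ : 0 < τ)
    (pA : ℝ → ℝ) (hpA_meas : Measurable pA) (hpA_nonneg : ∀ a, 0 ≤ pA a)
    (hpA_prob : ∫ a in Ioi (0 : ℝ), pA a = 1)
    (hpA_mom : IntegrableOn (fun a : ℝ => a ^ (-(1 : ℝ) / 2) * pA a) (Ioi 0))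
    (q : ℝ → ℝ)
    (hq : q = fun x => ∫ a in Ioi (0 : ℝ),
      (2 * π * a * τ ^ 2) ^ (-(1 : ℝ) / 2) * Real.exp (-(x - c) ^ 2 / (2 * a * τ ^ 2)) * pA a) :
    (∀ x : ℝ, IntegrableOn (fun a : ℝ =>
        (2 * π * a * τ ^ 2) ^ (-(1 : ℝ) / 2) * Real.exp (-(x - c) ^ 2 / (2 * a * τ ^ 2)) * pA a)
      (Ioi 0)) ∧
    (∀ x : ℝ, x ≠ c → q x < q c) := by
  have hKpos : (0:ℝ) < 2 * π * τ ^ 2 := by positivity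
  have hmeas : ∀ x : ℝ, Measurable (fun a : ℝ =>
      (2 * π * a * τ ^ 2) ^ (-(1 : ℝ) / 2) * Real.exp (-(x - c) ^ 2 / (2 * a * τ ^ 2)) * pA a) := by
    intro x; fun_prop
  -- key pointwise facts for a > 0
  have hbound : ∀ x : ℝ, ∀ a ∈ Ioi (0:ℝ),
      (2 * π * a * τ ^ 2) ^ (-(1 : ℝ) / 2) * Real.exp (-(x - c) ^ 2 / (2 * a * τ ^ 2)) * pA a
        ≤ (2 * π * τ ^ 2) ^ (-(1:ℝ)/2) * (a ^ (-(1 : ℝ) / 2) * pA a) := by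
    intro x a ha
    have ha0 : (0:ℝ) < a := ha
    have hsplit : (2 * π * a * τ ^ 2) ^ (-(1 : ℝ) / 2)
        = (2 * π * τ ^ 2) ^ (-(1:ℝ)/2) * a ^ (-(1 : ℝ) / 2) := by
      rw [show 2 * π * a * τ ^ 2 = (2 * π * τ ^ 2) * a by ring,
        Real.mul_rpow hKpos.le ha0.le]
    have hexp : Real.exp (-(x - c) ^ 2 / (2 * a * τ ^ 2)) ≤ 1 := by
      rw [Real.exp_le_one_iff]
      apply div_nonpos_of_nonpos_of_nonneg
      · simpa using sq_nonneg (x - c)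
      · positivity
    calc (2 * π * a * τ ^ 2) ^ (-(1 : ℝ) / 2) * Real.exp (-(x - c) ^ 2 / (2 * a * τ ^ 2)) * pA a
        ≤ (2 * π * a * τ ^ 2) ^ (-(1 : ℝ) / 2) * 1 * pA a := by
          apply mul_le_mul_of_nonneg_right _ (hpA_nonneg a)
          exact mul_le_mul_of_nonneg_left hexp (Real.rpow_nonneg (by positivity) _)
      _ = (2 * π * τ ^ 2) ^ (-(1:ℝ)/2) * (a ^ (-(1 : ℝ) / 2) * pA a) := by
          rw [hsplit]; ring
  have hnonneg : ∀ x : ℝ, ∀ a ∈ Ioi (0:ℝ),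
      0 ≤ (2 * π * a * τ ^ 2) ^ (-(1 : ℝ) / 2) * Real.exp (-(x - c) ^ 2 / (2 * a * τ ^ 2)) * pA a := by
    intro x a ha
    have ha0 : (0:ℝ) < a := ha
    have := hpA_nonneg a
    positivity
  have hint : ∀ x : ℝ, IntegrableOn (fun a : ℝ =>
      (2 * π * a * τ ^ 2) ^ (-(1 : ℝ) / 2) * Real.exp (-(x - c) ^ 2 / (2 * a * τ ^ 2)) * pA a)
      (Ioi 0) := by
    intro x
    apply Integrable.mono' (hpA_mom.const_mul ((2 * π * τ ^ 2) ^ (-(1:ℝ)/2)))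
      ((hmeas x).aestronglyMeasurable)
    rw [ae_restrict_iff' measurableSet_Ioi]
    filter_upwards with a ha
    rw [Real.norm_of_nonneg (hnonneg x a ha)]
    exact hbound x a ha
  refine ⟨hint, ?_⟩
  intro x hx
  have hSmeas : MeasurableSet {a : ℝ | pA a ≠ 0} :=
    (hpA_meas (measurableSet_singleton 0)).compl
  have hSpos : 0 < volume ({a : ℝ | pA a ≠ 0} ∩ Ioi 0) := by
    by_contra h
    push_neg at h
    have hnull : volume ({a : ℝ | pA a ≠ 0} ∩ Ioi 0) = 0 := le_antisymm h zero_le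
    have hrnull : (volume.restrict (Ioi (0:ℝ))) {a : ℝ | pA a ≠ 0} = 0 := by
      rw [Measure.restrict_apply hSmeas]; exact hnull
    have hae : ∀ᵐ a ∂(volume.restrict (Ioi (0:ℝ))), pA a = 0 := ae_iff.2 hrnull
    have : (∫ a in Ioi (0:ℝ), pA a) = 0 := by
      rw [integral_congr_ae hae]; simp
    rw [hpA_prob] at this
    norm_num at this
  set f := fun a : ℝ =>
    (2 * π * a * τ ^ 2) ^ (-(1 : ℝ) / 2) * Real.exp (-(x - c) ^ 2 / (2 * a * τ ^ 2)) * pA a with hf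
  set g := fun a : ℝ =>
    (2 * π * a * τ ^ 2) ^ (-(1 : ℝ) / 2) * Real.exp (-(c - c) ^ 2 / (2 * a * τ ^ 2)) * pA a with hg
  have hg_simp : ∀ a : ℝ, g a = (2 * π * a * τ ^ 2) ^ (-(1 : ℝ) / 2) * pA a := by
    intro a
    simp [hg]
  have hexp_lt : ∀ a ∈ Ioi (0:ℝ), Real.exp (-(x - c) ^ 2 / (2 * a * τ ^ 2)) < 1 := by
    intro a ha
    have ha0 : (0:ℝ) < a := ha
    rw [Real.exp_lt_one_iff]
    apply div_neg_of_neg_of_pos _ (by positivity)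
    have : (0:ℝ) < (x - c) ^ 2 := by
      have : x - c ≠ 0 := sub_ne_zero.2 hx
      positivity
    linarith
  have hdiff_nonneg : ∀ a ∈ Ioi (0:ℝ), 0 ≤ g a - f a := by
    intro a ha
    have ha0 : (0:ℝ) < a := ha
    have h1 : f a ≤ (2 * π * a * τ ^ 2) ^ (-(1 : ℝ) / 2) * 1 * pA a := by
      apply mul_le_mul_of_nonneg_right _ (hpA_nonneg a)
      exact mul_le_mul_of_nonneg_left (hexp_lt a ha).le (Real.rpow_nonneg (by positivity) _)
    rw [hg_simp a]
    simpa using h1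
  have hdiff_pos : ∀ a ∈ Ioi (0:ℝ), pA a ≠ 0 → 0 < g a - f a := by
    intro a ha hpa
    have ha0 : (0:ℝ) < a := ha
    have hpa' : 0 < pA a := lt_of_le_of_ne (hpA_nonneg a) (Ne.symm hpa)
    have h1 : f a < (2 * π * a * τ ^ 2) ^ (-(1 : ℝ) / 2) * 1 * pA a := by
      apply mul_lt_mul_of_pos_right _ hpa'
      exact mul_lt_mul_of_pos_left (hexp_lt a ha) (Real.rpow_pos_of_pos (by positivity) _)
    rw [hg_simp a]
    simpa using h1
  have hintsub : IntegrableOn (fun a => g a - f a) (Ioi 0) := (hint c).sub (hint x)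
  have hpos : 0 < ∫ a in Ioi (0:ℝ), (g a - f a) := by
    rw [setIntegral_pos_iff_support_of_nonneg_ae _ hintsub]
    · apply lt_of_lt_of_le hSpos
      apply measure_mono
      rintro a ⟨hpa, ha⟩
      exact ⟨ne_of_gt (hdiff_pos a ha hpa), ha⟩
    · rw [Filter.EventuallyLE, ae_restrict_iff' measurableSet_Ioi]
      filter_upwards with a ha
      exact hdiff_nonneg a ha
  have hsub : (∫ a in Ioi (0:ℝ), (g a - f a)) = q c - q x := by
    rw [integral_sub (hint c) (hint x), hq]
  linarith
end
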